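/- arXiv:1807.05416 — 5 statements merged into one kernel-verified Lean document; each statement's English description precedes it below -/
import Mathlib

section
/- Let k be a field, S = k[x_1,…,x_q] a polynomial ring, and λ an integral weight function on S. Let g_1,…,g_{m+n} be nonzero polynomials in S such that each g_i has a unique term of maximal λ-weight (so that its initial form in_λ(g_i) is a single term). Set I = (g_1,…,g_m) and J = (g_1,…,g_{m+n}), and assume these generating sets are Gröbner bases with respect to λ, i.e. in_λ(I) = (in_λ(g_1),…,in_λ(g_m)) and in_λ(J) = (in_λ(g_1),…,in_λ(g_{m+n})). Define the integral weight function λ̃ on the polynomial ring S[ε_1,…,ε_{m+n}] by λ̃(x_j) = λ(x_j) for each variable x_j of S and λ̃(ε_i) = λ(in_λ(g_i)). Then the λ̃-initial ideal of the blow-up presentation ideal satisfies in_{λ̃}( I·S[ε] + (ε_1,…,ε_m) + Syz({g_1,…,g_{m+n}}) ) = in_λ(I)·S[ε] + (ε_1,…,ε_m) + Syz({in_λ(g_1),…,in_λ(g_{m+n})}), where both syzygy ideals are taken with respect to the full list of m+n elements. (This says the blow-up algebra of S/I along J/I Gröbner-degenerates, via λ̃, to the blow-up algebra of S/in_λ(I)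 along in_λ(J)/in_λ(I).) -/
open MvPolynomial

noncomputable section

/-- The `λ`-weight of a monomial exponent vector: weights extend additively to monomials. -/
def monWeight {σ : Type*} (lam : σ → ℤ) (d : σ →₀ ℕ) : ℤ :=
  d.sum fun i m => (m : ℤ) * lam i

/-- The initial form `in_λ(f)`: the sum of the terms of `f` of maximal `λ`-weight. -/
def initialForm {σ K : Type*} [CommSemiring K] (lam : σ → ℤ) (f : MvPolynomial σ K) :
    MvPolynomial σ K :=
  ∑ d ∈ f.support.filter
      (fun d => ∀ e ∈ f.support, monWeight lam e ≤ monWeight lam d),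
    monomial d (coeff d f)

/-- The initial ideal `in_λ(I)`, generated by the initial forms of the nonzero elements. -/
def initialIdeal {σ K : Type*} [CommSemiring K] (lam : σ → ℤ) (I : Ideal (MvPolynomial σ K)) :
    Ideal (MvPolynomial σ K) :=
  Ideal.span {g | ∃ f ∈ I, f ≠ 0 ∧ g = initialForm lam f}

/-- The maximal `λ`-weight of a term of `f` (with junk value `0` for `f = 0`). -/
def maxWeight {σ K : Type*} [CommSemiring K] (lam : σ → ℤ) (f : MvPolynomial σ K) : ℤ :=
  WithBot.unbotD 0 (f.support.image (monWeight lam)).max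

/-- The syzygy ideal `Syz({g_i}) = (ε_1,…,ε_N) ∩ ker ev` in `S[ε_1,…,ε_N]`, where
`ev : S[ε_1,…,ε_N] → S` is the `S`-algebra map sending `ε_i` to `g_i`. -/
def syzygyIdeal {k : Type*} [CommRing k] {q N : ℕ} (g : Fin N → MvPolynomial (Fin q) k) :
    Ideal (MvPolynomial (Fin q ⊕ Fin N) k) :=
  Ideal.span (Set.range fun i : Fin N => (X (Sum.inr i) : MvPolynomial (Fin q ⊕ Fin N) k))
    ⊓ RingHom.ker (aeval (Sum.elim X g) :
        MvPolynomial (Fin q ⊕ Fin N) k →ₐ[k] MvPolynomial (Fin q) k)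

namespace GAux

variable {K : Type*} [CommRing K] {σ : Type*}

/-- all monomial weights ≤ w -/
def WLE (lam : σ → ℤ) (w : ℤ) (f : MvPolynomial σ K) : Prop :=
  ∀ d ∈ f.support, monWeight lam d ≤ w

def WLT (lam : σ → ℤ) (w : ℤ) (f : MvPolynomial σ K) : Prop :=
  ∀ d ∈ f.support, monWeight lam d < w

def WEQ (lam : σ → ℤ) (w : ℤ) (f : MvPolynomial σ K) : Prop :=
  ∀ d ∈ f.support, monWeight lam d = w

variable {lam : σ → ℤ}

theorem monWeight_add (d e : σ →₀ ℕ) :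
    monWeight lam (d + e) = monWeight lam d + monWeight lam e := by
  classical
  unfold monWeight
  rw [Finsupp.sum_add_index]
  · intro i _; simp
  · intro i _ m1 m2; push_cast; ring

@[simp] theorem monWeight_zero : monWeight lam (0 : σ →₀ ℕ) = 0 := by
  simp [monWeight]

theorem monWeight_single (i : σ) (m : ℕ) :
    monWeight lam (Finsupp.single i m) = (m : ℤ) * lam i := by
  classical
  unfold monWeight
  rw [Finsupp.sum_single_index]
  simp

-- WLE / WLT / WEQ basics
theorem WLE.mono {w w' : ℤ} (h : w ≤ w') {f : MvPolynomial σ K} (hf : WLE lam w f) :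
    WLE lam w' f := fun d hd => (hf d hd).trans h

theorem WLT.wle {w : ℤ} {f : MvPolynomial σ K} (hf : WLT lam w f) : WLE lam w f :=
  fun d hd => (hf d hd).le

theorem WEQ.wle {w : ℤ} {f : MvPolynomial σ K} (hf : WEQ lam w f) : WLE lam w f :=
  fun d hd => (hf d hd).le

theorem WLT_iff_WLE_sub_one {w : ℤ} {f : MvPolynomial σ K} :
    WLT lam w f ↔ WLE lam (w - 1) f := by
  constructor <;> intro h d hd
  · exact Int.le_sub_one_of_lt (h d hd)
  · exact Int.lt_of_le_sub_one (h d hd)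

@[simp] theorem WLE.zero {w : ℤ} : WLE lam w (0 : MvPolynomial σ K) := by
  intro d hd; simp at hd

@[simp] theorem WLT.zero {w : ℤ} : WLT lam w (0 : MvPolynomial σ K) := by
  intro d hd; simp at hd

@[simp] theorem WEQ.zero {w : ℤ} : WEQ lam w (0 : MvPolynomial σ K) := by
  intro d hd; simp at hd

theorem WLE.add {w : ℤ} {f g : MvPolynomial σ K} (hf : WLE lam w f) (hg : WLE lam w g) :
    WLE lam w (f + g) := by
  classical
  intro d hd
  rcases Finset.mem_union.1 (MvPolynomial.support_add hd) with h | h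
  · exact hf d h
  · exact hg d h

theorem WLT.add {w : ℤ} {f g : MvPolynomial σ K} (hf : WLT lam w f) (hg : WLT lam w g) :
    WLT lam w (f + g) := by
  classical
  intro d hd
  rcases Finset.mem_union.1 (MvPolynomial.support_add hd) with h | h
  · exact hf d h
  · exact hg d h

theorem WEQ.add {w : ℤ} {f g : MvPolynomial σ K} (hf : WEQ lam w f) (hg : WEQ lam w g) :
    WEQ lam w (f + g) := by
  classical
  intro d hd
  rcases Finset.mem_union.1 (MvPolynomial.support_add hd) with h | h
  · exact hf d h
  · exact hg d h

theorem WLE.neg {w : ℤ} {f : MvPolynomial σ K} (hf : WLE lam w f) : WLE lam w (-f) := by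
  intro d hd; rw [MvPolynomial.support_neg] at hd; exact hf d hd

theorem WLT.neg {w : ℤ} {f : MvPolynomial σ K} (hf : WLT lam w f) : WLT lam w (-f) := by
  intro d hd; rw [MvPolynomial.support_neg] at hd; exact hf d hd

theorem WEQ.neg {w : ℤ} {f : MvPolynomial σ K} (hf : WEQ lam w f) : WEQ lam w (-f) := by
  intro d hd; rw [MvPolynomial.support_neg] at hd; exact hf d hd

theorem WLE.sub {w : ℤ} {f g : MvPolynomial σ K} (hf : WLE lam w f) (hg : WLE lam w g) :
    WLE lam w (f - g) := by
  rw [sub_eq_add_neg]; exact hf.add hg.neg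

theorem WLT.sub {w : ℤ} {f g : MvPolynomial σ K} (hf : WLT lam w f) (hg : WLT lam w g) :
    WLT lam w (f - g) := by
  rw [sub_eq_add_neg]; exact hf.add hg.neg

theorem WEQ.sub {w : ℤ} {f g : MvPolynomial σ K} (hf : WEQ lam w f) (hg : WEQ lam w g) :
    WEQ lam w (f - g) := by
  rw [sub_eq_add_neg]; exact hf.add hg.neg

theorem WLE.sum {w : ℤ} {ι : Type*} {s : Finset ι} {f : ι → MvPolynomial σ K}
    (h : ∀ i ∈ s, WLE lam w (f i)) : WLE lam w (∑ i ∈ s, f i) := by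
  classical
  induction s using Finset.induction_on with
  | empty => simpa using (WLE.zero (lam := lam) (w := w))
  | insert _ _ hni ih =>
      rename_i a s
      rw [Finset.sum_insert hni]
      exact (h a (Finset.mem_insert_self a s)).add
        (ih fun i hi => h i (Finset.mem_insert_of_mem hi))

theorem WLT.sum {w : ℤ} {ι : Type*} {s : Finset ι} {f : ι → MvPolynomial σ K}
    (h : ∀ i ∈ s, WLT lam w (f i)) : WLT lam w (∑ i ∈ s, f i) := by
  classical
  induction s using Finset.induction_on with
  | empty => simpa using (WLT.zero (lam := lam) (w := w))
  | insert _ _ hni ih =>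
      rename_i a s
      rw [Finset.sum_insert hni]
      exact (h a (Finset.mem_insert_self a s)).add
        (ih fun i hi => h i (Finset.mem_insert_of_mem hi))

theorem WEQ.sum {w : ℤ} {ι : Type*} {s : Finset ι} {f : ι → MvPolynomial σ K}
    (h : ∀ i ∈ s, WEQ lam w (f i)) : WEQ lam w (∑ i ∈ s, f i) := by
  classical
  induction s using Finset.induction_on with
  | empty => simpa using (WEQ.zero (lam := lam) (w := w))
  | insert _ _ hni ih =>
      rename_i a s
      rw [Finset.sum_insert hni]
      exact (h a (Finset.mem_insert_self a s)).add
        (ih fun i hi => h i (Finset.mem_insert_of_mem hi))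

theorem WLE.mul {a b : ℤ} {f g : MvPolynomial σ K} (hf : WLE lam a f) (hg : WLE lam b g) :
    WLE lam (a + b) (f * g) := by
  classical
  intro d hd
  obtain ⟨d1, hd1, d2, hd2, rfl⟩ := Finset.mem_add.1 (MvPolynomial.support_mul f g hd)
  rw [monWeight_add]
  exact add_le_add (hf d1 hd1) (hg d2 hd2)

theorem WLE.mul_wlt {a b : ℤ} {f g : MvPolynomial σ K} (hf : WLE lam a f) (hg : WLT lam b g) :
    WLT lam (a + b) (f * g) := by
  classical
  intro d hd
  obtain ⟨d1, hd1, d2, hd2, rfl⟩ := Finset.mem_add.1 (MvPolynomial.support_mul f g hd)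
  rw [monWeight_add]
  exact add_lt_add_of_le_of_lt (hf d1 hd1) (hg d2 hd2)

theorem WLT.mul_wle {a b : ℤ} {f g : MvPolynomial σ K} (hf : WLT lam a f) (hg : WLE lam b g) :
    WLT lam (a + b) (f * g) := by
  classical
  intro d hd
  obtain ⟨d1, hd1, d2, hd2, rfl⟩ := Finset.mem_add.1 (MvPolynomial.support_mul f g hd)
  rw [monWeight_add]
  exact add_lt_add_of_lt_of_le (hf d1 hd1) (hg d2 hd2)

theorem WEQ.mul {a b : ℤ} {f g : MvPolynomial σ K} (hf : WEQ lam a f) (hg : WEQ lam b g) :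
    WEQ lam (a + b) (f * g) := by
  classical
  intro d hd
  obtain ⟨d1, hd1, d2, hd2, rfl⟩ := Finset.mem_add.1 (MvPolynomial.support_mul f g hd)
  rw [monWeight_add, hf d1 hd1, hg d2 hd2]

theorem WEQ.monomial {w : ℤ} {d : σ →₀ ℕ} (hd : monWeight lam d = w) (c : K) :
    WEQ lam w (monomial d c) := by
  intro e he
  rcases (Finset.mem_singleton.1 (MvPolynomial.support_monomial_subset he))
  exact hd

theorem WEQ.pow {a : ℤ} {f : MvPolynomial σ K} (hf : WEQ lam a f) (n : ℕ) :
    WEQ lam (n * a) (f ^ n) := by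
  induction n with
  | zero => rw [pow_zero, MvPolynomial.one_def, Nat.cast_zero, zero_mul]; exact WEQ.monomial (by simp) 1
  | succ n ih =>
      rw [pow_succ]
      have := ih.mul hf
      rwa [show (n : ℤ) * a + a = (n + 1 : ℕ) * a by push_cast; ring] at this

end GAux

namespace GAux

variable {K : Type*} [CommRing K] {σ : Type*} {lam : σ → ℤ}

theorem le_maxWeight {f : MvPolynomial σ K} {d : σ →₀ ℕ} (hd : d ∈ f.support) :
    monWeight lam d ≤ maxWeight lam f := by
  classical
  have hne : (f.support.image (monWeight lam)).Nonempty :=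
    ⟨monWeight lam d, Finset.mem_image_of_mem _ hd⟩
  obtain ⟨b, hb⟩ := Finset.max_of_nonempty hne
  have := Finset.le_max (Finset.mem_image_of_mem (monWeight lam) hd)
  rw [hb] at this
  rw [maxWeight, hb]
  exact_mod_cast this

theorem WLE_maxWeight (f : MvPolynomial σ K) : WLE lam (maxWeight lam f) f :=
  fun _ hd => le_maxWeight hd

theorem exists_monWeight_eq_max {f : MvPolynomial σ K} (hf : f ≠ 0) :
    ∃ d ∈ f.support, monWeight lam d = maxWeight lam f := by
  classical
  have hne : (f.support.image (monWeight lam)).Nonempty := by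
    rw [Finset.image_nonempty]
    exact MvPolynomial.support_nonempty.2 hf
  obtain ⟨b, hb⟩ := Finset.max_of_nonempty hne
  obtain ⟨d, hd, hdb⟩ := Finset.mem_image.1 (Finset.mem_of_max hb)
  refine ⟨d, hd, ?_⟩
  rw [maxWeight, hb, hdb]
  rfl

theorem maxWeight_le {f : MvPolynomial σ K} {w : ℤ} (hf : f ≠ 0) (h : WLE lam w f) :
    maxWeight lam f ≤ w := by
  obtain ⟨d, hd, hdw⟩ := exists_monWeight_eq_max (lam := lam) hf
  rw [← hdw]; exact h d hd

/-- The weight-`w` component of a polynomial. -/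
def comp (lam : σ → ℤ) (w : ℤ) (f : MvPolynomial σ K) : MvPolynomial σ K :=
  ∑ d ∈ f.support.filter (fun d => monWeight lam d = w), monomial d (coeff d f)

theorem coeff_comp (w : ℤ) (f : MvPolynomial σ K) (e : σ →₀ ℕ) :
    coeff e (comp lam w f) = if monWeight lam e = w then coeff e f else 0 := by
  classical
  rw [comp, MvPolynomial.coeff_sum]
  have : ∀ d ∈ f.support.filter (fun d => monWeight lam d = w),
      coeff e (monomial d (coeff d f)) = if d = e then coeff d f else 0 := by
    intro d _; rw [MvPolynomial.coeff_monomial]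
  rw [Finset.sum_congr rfl this, Finset.sum_ite_eq' _ e (fun d => coeff d f)]
  by_cases he : e ∈ f.support.filter (fun d => monWeight lam d = w)
  · rw [if_pos he, if_pos (Finset.mem_filter.1 he).2]
  · rw [if_neg he]
    by_cases hw : monWeight lam e = w
    · rw [if_pos hw]
      by_cases hs : e ∈ f.support
      · exact absurd (Finset.mem_filter.2 ⟨hs, hw⟩) he
      · exact (MvPolynomial.notMem_support_iff.1 hs).symm
    · rw [if_neg hw]

theorem comp_WEQ (w : ℤ) (f : MvPolynomial σ K) : WEQ lam w (comp lam w f) := by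
  intro d hd
  have := MvPolynomial.mem_support_iff.1 hd
  rw [coeff_comp] at this
  by_contra hne
  rw [if_neg hne] at this
  exact this rfl

theorem comp_add (w : ℤ) (f g : MvPolynomial σ K) :
    comp lam w (f + g) = comp lam w f + comp lam w g := by
  ext e
  rw [MvPolynomial.coeff_add, coeff_comp, coeff_comp, coeff_comp, MvPolynomial.coeff_add]
  split <;> simp

@[simp] theorem comp_zero (w : ℤ) : comp lam w (0 : MvPolynomial σ K) = 0 := by
  ext e
  rw [coeff_comp, MvPolynomial.coeff_zero]
  split <;> rfl

theorem comp_neg (w : ℤ) (f : MvPolynomial σ K) : comp lam w (-f) = - comp lam w f := by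
  ext e
  rw [MvPolynomial.coeff_neg, coeff_comp, coeff_comp, MvPolynomial.coeff_neg]
  split <;> simp

theorem comp_sub (w : ℤ) (f g : MvPolynomial σ K) :
    comp lam w (f - g) = comp lam w f - comp lam w g := by
  rw [sub_eq_add_neg, comp_add, comp_neg, sub_eq_add_neg]

theorem comp_finsum {ι : Type*} (w : ℤ) (s : Finset ι) (f : ι → MvPolynomial σ K) :
    comp lam w (∑ i ∈ s, f i) = ∑ i ∈ s, comp lam w (f i) := by
  classical
  induction s using Finset.induction_on with
  | empty => simp [comp]
  | insert _ _ hni ih =>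
      rename_i a s
      rw [Finset.sum_insert hni, Finset.sum_insert hni, comp_add, ih]

theorem WEQ.comp_same {w : ℤ} {f : MvPolynomial σ K} (h : WEQ lam w f) :
    comp lam w f = f := by
  ext e
  rw [coeff_comp]
  by_cases he : e ∈ f.support
  · rw [if_pos (h e he)]
  · have : coeff e f = 0 := MvPolynomial.notMem_support_iff.1 he
    rw [this]; split <;> rfl

theorem WEQ.comp_ne {w w' : ℤ} {f : MvPolynomial σ K} (h : WEQ lam w' f) (hne : w ≠ w') :
    comp lam w f = 0 := by
  ext e
  rw [coeff_comp, MvPolynomial.coeff_zero]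
  by_cases he : e ∈ f.support
  · rw [if_neg]; rw [h e he]; exact fun hc => hne hc.symm
  · have : coeff e f = 0 := MvPolynomial.notMem_support_iff.1 he
    rw [this]; split <;> rfl

theorem comp_eq_zero_of_gt {w w' : ℤ} {f : MvPolynomial σ K} (h : WLE lam w' f)
    (hw : w' < w) : comp lam w f = 0 := by
  ext e
  rw [coeff_comp, MvPolynomial.coeff_zero]
  by_cases he : e ∈ f.support
  · rw [if_neg]; exact fun hc => absurd (h e he) (by rw [hc]; exact not_le.2 hw)
  · have : coeff e f = 0 := MvPolynomial.notMem_support_iff.1 he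
    rw [this]; split <;> rfl

theorem sum_comp {f : MvPolynomial σ K} {A : Finset ℤ}
    (hA : ∀ d ∈ f.support, monWeight lam d ∈ A) :
    ∑ w ∈ A, comp lam w f = f := by
  classical
  ext e
  rw [MvPolynomial.coeff_sum]
  have : ∀ w ∈ A, coeff e (comp lam w f) = if monWeight lam e = w then coeff e f else 0 :=
    fun w _ => coeff_comp w f e
  rw [Finset.sum_congr rfl this, Finset.sum_ite_eq A (monWeight lam e) (fun _ => coeff e f)]
  by_cases he : e ∈ f.support
  · rw [if_pos (hA e he)]
  · have h0 : coeff e f = 0 := MvPolynomial.notMem_support_iff.1 he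
    rw [h0]; split <;> rfl

theorem comp_mul_homog {b : ℤ} {h : MvPolynomial σ K} (hh : WEQ lam b h)
    (w : ℤ) (f : MvPolynomial σ K) :
    comp lam w (f * h) = comp lam (w - b) f * h := by
  classical
  ext e
  rw [coeff_comp, MvPolynomial.coeff_mul, MvPolynomial.coeff_mul]
  have key : ∀ p ∈ Finset.HasAntidiagonal.antidiagonal e,
      (coeff p.1 (comp lam (w - b) f)) * coeff p.2 h
        = if monWeight lam e = w then coeff p.1 f * coeff p.2 h else 0 := by
    intro p hp
    have hpe : p.1 + p.2 = e := Finset.HasAntidiagonal.mem_antidiagonal.1 hp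
    by_cases hv : coeff p.2 h = 0
    · rw [hv, mul_zero]
      split <;> simp
    · have hwv : monWeight lam p.2 = b := hh p.2 (MvPolynomial.mem_support_iff.2 hv)
      have hsum : monWeight lam e = monWeight lam p.1 + monWeight lam p.2 := by
        rw [← hpe, monWeight_add]
      rw [coeff_comp]
      by_cases hew : monWeight lam e = w
      · rw [if_pos (by omega), if_pos hew]
      · rw [if_neg (by omega), if_neg hew, zero_mul]
  rw [Finset.sum_congr rfl key]
  by_cases hew : monWeight lam e = w
  · rw [if_pos hew]
    exact Finset.sum_congr rfl (fun p hp => (if_pos hew).symm)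
  · rw [if_neg hew]
    rw [Finset.sum_congr rfl (fun p (hp : p ∈ Finset.HasAntidiagonal.antidiagonal e) => if_neg hew),
      Finset.sum_const_zero]

theorem initialForm_eq_comp {f : MvPolynomial σ K} (hf : f ≠ 0) :
    initialForm lam f = comp lam (maxWeight lam f) f := by
  classical
  rw [initialForm, comp]
  congr 1
  apply Finset.filter_congr
  intro d hd
  constructor
  · intro hmax
    obtain ⟨e, he, hew⟩ := exists_monWeight_eq_max (lam := lam) hf
    exact le_antisymm (le_maxWeight hd) (by rw [← hew]; exact hmax e he)
  · intro hdw e he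
    rw [hdw]; exact le_maxWeight he

@[simp] theorem initialForm_zero : initialForm lam (0 : MvPolynomial σ K) = 0 := by
  simp [initialForm]

theorem coeff_initialForm {f : MvPolynomial σ K} (hf : f ≠ 0) (e : σ →₀ ℕ) :
    coeff e (initialForm lam f)
      = if monWeight lam e = maxWeight lam f then coeff e f else 0 := by
  rw [initialForm_eq_comp hf, coeff_comp]

theorem WEQ_initialForm (f : MvPolynomial σ K) :
    WEQ lam (maxWeight lam f) (initialForm lam f) := by
  by_cases hf : f = 0
  · rw [hf, initialForm_zero]; exact WEQ.zero
  · rw [initialForm_eq_comp hf]; exact comp_WEQ _ _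

theorem initialForm_ne_zero {f : MvPolynomial σ K} (hf : f ≠ 0) :
    initialForm lam f ≠ 0 := by
  obtain ⟨d, hd, hdw⟩ := exists_monWeight_eq_max (lam := lam) hf
  intro h0
  have := coeff_initialForm (lam := lam) hf d
  rw [h0, if_pos hdw, MvPolynomial.coeff_zero] at this
  exact (MvPolynomial.mem_support_iff.1 hd) this.symm

theorem WLT_sub_initialForm {f : MvPolynomial σ K} (hf : f ≠ 0) :
    WLT lam (maxWeight lam f) (f - initialForm lam f) := by
  intro d hd
  have hco := MvPolynomial.mem_support_iff.1 hd
  rw [MvPolynomial.coeff_sub, coeff_initialForm hf] at hco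
  by_cases hdw : monWeight lam d = maxWeight lam f
  · rw [if_pos hdw, sub_self] at hco; exact absurd rfl hco
  · refine lt_of_le_of_ne ?_ hdw
    rw [if_neg hdw, sub_zero] at hco
    exact le_maxWeight (MvPolynomial.mem_support_iff.2 hco)

/-- Recognition lemma: a nonzero homogeneous part plus lower-order terms. -/
theorem initialForm_add_of_WLT {w : ℤ} {H r : MvPolynomial σ K} (hH : H ≠ 0)
    (hHw : WEQ lam w H) (hr : WLT lam w r) :
    initialForm lam (H + r) = H ∧ (H + r) ≠ 0 ∧ maxWeight lam (H + r) = w := by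
  have hcomp : comp lam w (H + r) = H := by
    rw [comp_add, hHw.comp_same,
      comp_eq_zero_of_gt (WLT_iff_WLE_sub_one.1 hr) (by omega), add_zero]
  have hne : H + r ≠ 0 := by
    intro h0
    rw [h0] at hcomp
    rw [comp_zero] at hcomp
    exact hH hcomp.symm
  have hle : WLE lam w (H + r) := hHw.wle.add hr.wle
  have hmax : maxWeight lam (H + r) = w := by
    refine le_antisymm (maxWeight_le hne hle) ?_
    obtain ⟨d, hd, hdw⟩ := exists_monWeight_eq_max (lam := lam) (f := H) hH
    have hcd : coeff d (H + r) ≠ 0 := by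
      have hrd : coeff d r = 0 := by
        by_contra hc
        exact absurd (hHw d hd) (by
          have := hr d (MvPolynomial.mem_support_iff.2 hc); omega)
      rw [MvPolynomial.coeff_add, hrd, add_zero]
      exact MvPolynomial.mem_support_iff.1 hd
    have := le_maxWeight (lam := lam) (MvPolynomial.mem_support_iff.2 hcd)
    rw [hHw d hd] at this
    exact this
  refine ⟨?_, hne, hmax⟩
  rw [initialForm_eq_comp hne, hmax, hcomp]

theorem WEQ.initialForm_self {w : ℤ} {f : MvPolynomial σ K} (hf : f ≠ 0)
    (h : WEQ lam w f) : initialForm lam f = f := by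
  have := initialForm_add_of_WLT (lam := lam) hf h (WLT.zero (w := w))
  rw [add_zero] at this
  exact this.1

theorem WEQ.maxWeight_eq {w : ℤ} {f : MvPolynomial σ K} (hf : f ≠ 0)
    (h : WEQ lam w f) : maxWeight lam f = w := by
  have := initialForm_add_of_WLT (lam := lam) hf h (WLT.zero (w := w))
  rw [add_zero] at this
  exact this.2.2

end GAux

namespace GAux

variable {K : Type*} [CommRing K] {σ τ : Type*} {mu : σ → ℤ} {nu : τ → ℤ}

theorem WEQ.C (c : K) : WEQ nu 0 (MvPolynomial.C c : MvPolynomial τ K) := by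
  rw [MvPolynomial.C_apply]
  exact WEQ.monomial monWeight_zero c

theorem WEQ.one : WEQ nu 0 (1 : MvPolynomial τ K) := by
  rw [← MvPolynomial.C_1]; exact WEQ.C 1

theorem WEQ_X (i : τ) : WEQ nu (nu i) (MvPolynomial.X i : MvPolynomial τ K) := by
  have h := WEQ.monomial (lam := nu) (d := Finsupp.single i 1) (w := nu i)
    (by rw [monWeight_single]; push_cast; ring) (1 : K)
  rwa [← MvPolynomial.X_pow_eq_monomial, pow_one] at h

theorem WLE.pow {a : ℤ} {f : MvPolynomial τ K} (hf : WLE nu a f) (n : ℕ) :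
    WLE nu (n * a) (f ^ n) := by
  induction n with
  | zero => simpa using WEQ.one.wle
  | succ n ih =>
      rw [pow_succ]
      have := ih.mul hf
      rwa [show (n : ℤ) * a + a = (n + 1 : ℕ) * a by push_cast; ring] at this

theorem WLT.pow_succ {a : ℤ} {f : MvPolynomial τ K} (hf : WLT nu a f) (n : ℕ) :
    WLT nu ((n + 1 : ℕ) * a) (f ^ (n + 1)) := by
  have h := hf.mul_wle (hf.wle.pow n)
  rw [← pow_succ'] at h
  rwa [show a + (n : ℤ) * a = ((n + 1 : ℕ) : ℤ) * a by push_cast; ring] at h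

variable (v : σ → MvPolynomial τ K)

theorem WEQ_prod (hv : ∀ i, WEQ nu (mu i) (v i)) (d : σ →₀ ℕ) :
    WEQ nu (monWeight mu d) (d.prod fun i k => v i ^ k) := by
  classical
  induction d using Finsupp.induction with
  | zero => simpa using WEQ.one
  | single_add a b f ha hb ih =>
      rw [Finsupp.prod_add_index' (fun i => pow_zero (v i)) (fun i m n => pow_add (v i) m n),
        Finsupp.prod_single_index (h := fun (i : σ) (k : ℕ) => v i ^ k) (pow_zero (v a)), monWeight_add, monWeight_single]
      exact ((hv a).pow b).mul ih

theorem WLE_prod (hv : ∀ i, WLE nu (mu i) (v i)) (d : σ →₀ ℕ) :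
    WLE nu (monWeight mu d) (d.prod fun i k => v i ^ k) := by
  classical
  induction d using Finsupp.induction with
  | zero => simpa using WEQ.one.wle
  | single_add a b f ha hb ih =>
      rw [Finsupp.prod_add_index' (fun i => pow_zero (v i)) (fun i m n => pow_add (v i) m n),
        Finsupp.prod_single_index (h := fun (i : σ) (k : ℕ) => v i ^ k) (pow_zero (v a)), monWeight_add, monWeight_single]
      exact ((hv a).pow b).mul ih

theorem WEQ.aeval (hv : ∀ i, WEQ nu (mu i) (v i)) {w : ℤ} {f : MvPolynomial σ K}
    (hf : WEQ mu w f) : WEQ nu w (MvPolynomial.aeval v f) := by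
  rw [← MvPolynomial.support_sum_monomial_coeff f, map_sum]
  apply WEQ.sum
  intro d hd
  rw [MvPolynomial.aeval_monomial, ← hf d hd, MvPolynomial.algebraMap_eq]
  have h1 := (WEQ.C (nu := nu) (coeff d f)).mul (WEQ_prod v hv d)
  rwa [zero_add] at h1

theorem WLE.aeval (hv : ∀ i, WLE nu (mu i) (v i)) {w : ℤ} {f : MvPolynomial σ K}
    (hf : WLE mu w f) : WLE nu w (MvPolynomial.aeval v f) := by
  rw [← MvPolynomial.support_sum_monomial_coeff f, map_sum]
  apply WLE.sum
  intro d hd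
  rw [MvPolynomial.aeval_monomial]
  rw [MvPolynomial.algebraMap_eq]
  have h1 := (WEQ.C (nu := nu) (coeff d f)).wle.mul (WLE_prod v hv d)
  rw [zero_add] at h1
  exact WLE.mono (hf d hd) h1

end GAux

namespace GAux

variable {K : Type*} [CommRing K] {σ τ : Type*} {mu : σ → ℤ} {nu : τ → ℤ}

theorem WLT.mono {w w' : ℤ} (h : w ≤ w') {f : MvPolynomial σ K} (hf : WLT mu w f) :
    WLT mu w' f := fun d hd => lt_of_lt_of_le (hf d hd) h

theorem comp_eq_zero_of_not_mem {w : ℤ} {f : MvPolynomial σ K}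
    (h : w ∉ f.support.image (monWeight mu)) : comp mu w f = 0 := by
  classical
  ext e
  rw [coeff_comp, MvPolynomial.coeff_zero]
  by_cases hw : monWeight mu e = w
  · rw [if_pos hw]
    by_contra hc
    exact h (Finset.mem_image.2 ⟨e, MvPolynomial.mem_support_iff.2 fun h0 => hc h0, hw⟩)
  · rw [if_neg hw]

theorem comp_aeval (v : σ → MvPolynomial τ K) (hv : ∀ i, WEQ nu (mu i) (v i)) (w : ℤ)
    (f : MvPolynomial σ K) :
    MvPolynomial.aeval v (comp mu w f) = comp nu w (MvPolynomial.aeval v f) := by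
  classical
  have hdec : ∑ w' ∈ f.support.image (monWeight mu), comp mu w' f = f :=
    sum_comp (fun d hd => Finset.mem_image_of_mem _ hd)
  conv_rhs => rw [← hdec]
  rw [map_sum, comp_finsum]
  have hterm : ∀ w' ∈ f.support.image (monWeight mu),
      comp nu w (MvPolynomial.aeval v (comp mu w' f))
        = if w = w' then MvPolynomial.aeval v (comp mu w' f) else 0 := by
    intro w' _
    have hweq : WEQ nu w' (MvPolynomial.aeval v (comp mu w' f)) :=
      WEQ.aeval v hv (comp_WEQ w' f)
    by_cases h : w = w'
    · rw [if_pos h, h, hweq.comp_same]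
    · rw [if_neg h, hweq.comp_ne h]
  rw [Finset.sum_congr rfl hterm, Finset.sum_ite_eq _ w _]
  by_cases hw : w ∈ f.support.image (monWeight mu)
  · rw [if_pos hw]
  · rw [if_neg hw, comp_eq_zero_of_not_mem hw, map_zero]

theorem WLT_pow_sub_pow {a : ℤ} {x r : MvPolynomial σ K} (hx : WEQ mu a x)
    (hr : WLT mu a r) (b : ℕ) : WLT mu (b * a) ((x + r) ^ b - x ^ b) := by
  induction b with
  | zero => simpa using WLT.zero
  | succ b ih =>
      have hkey : (x + r) ^ (b + 1) - x ^ (b + 1)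
          = ((x + r) ^ b - x ^ b) * (x + r) + x ^ b * r := by ring
      rw [hkey]
      have h1 : WLT mu ((b : ℤ) * a + a) (((x + r) ^ b - x ^ b) * (x + r)) :=
        ih.mul_wle (hx.wle.add hr.wle)
      have h2 : WLT mu ((b : ℤ) * a + a) (x ^ b * r) := (hx.wle.pow b).mul_wlt hr
      have := h1.add h2
      rwa [show (b : ℤ) * a + a = ((b + 1 : ℕ) : ℤ) * a by push_cast; ring] at this

theorem WLT_prod_sub_prod {v : σ → MvPolynomial σ K}
    (hv : ∀ i, WLT mu (mu i) (v i - MvPolynomial.X i)) (d : σ →₀ ℕ) :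
    WLT mu (monWeight mu d)
      ((d.prod fun i k => v i ^ k) - d.prod fun i k => MvPolynomial.X i ^ k) := by
  classical
  induction d using Finsupp.induction with
  | zero => simpa using WLT.zero
  | single_add a b f hna hb ih =>
      rw [Finsupp.prod_add_index' (fun i => pow_zero (v i)) (fun i m n => pow_add (v i) m n),
        Finsupp.prod_add_index' (fun i => pow_zero (MvPolynomial.X i))
          (fun i m n => pow_add (MvPolynomial.X i) m n),
        Finsupp.prod_single_index (h := fun (i : σ) (k : ℕ) => v i ^ k) (pow_zero (v a)),
        Finsupp.prod_single_index (h := fun (i : σ) (k : ℕ) => MvPolynomial.X i ^ k)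
          (pow_zero (MvPolynomial.X a)),
        monWeight_add, monWeight_single]
      have hE : WLT mu ((b : ℤ) * mu a) (v a ^ b - MvPolynomial.X a ^ b) := by
        have := WLT_pow_sub_pow (WEQ_X (nu := mu) a) (hv a) b
        rwa [add_sub_cancel] at this
      have hkey : v a ^ b * (f.prod fun i k => v i ^ k)
            - MvPolynomial.X a ^ b * (f.prod fun i k => MvPolynomial.X i ^ k)
          = (v a ^ b - MvPolynomial.X a ^ b) * (f.prod fun i k => v i ^ k)
            + MvPolynomial.X a ^ b
              * ((f.prod fun i k => v i ^ k) - f.prod fun i k => MvPolynomial.X i ^ k) := by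
        ring
      rw [hkey]
      have hvle : ∀ i, WLE mu (mu i) (v i) := by
        intro i
        have := (WEQ_X (nu := mu) i).wle.add (hv i).wle
        rwa [add_sub_cancel] at this
      have h1 := hE.mul_wle (WLE_prod v hvle f)
      have h2 := ((WEQ_X (nu := mu) a).pow b).wle.mul_wlt ih
      exact h1.add h2

theorem WLT_aeval_sub_self {v : σ → MvPolynomial σ K}
    (hv : ∀ i, WLT mu (mu i) (v i - MvPolynomial.X i)) {w : ℤ} {f : MvPolynomial σ K}
    (hf : WLE mu w f) : WLT mu w (MvPolynomial.aeval v f - f) := by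
  classical
  have hsplit : MvPolynomial.aeval v f - f
      = ∑ d ∈ f.support,
          (MvPolynomial.aeval v (monomial d (coeff d f)) - monomial d (coeff d f)) := by
    rw [Finset.sum_sub_distrib, ← map_sum, MvPolynomial.support_sum_monomial_coeff]
  rw [hsplit]
  apply WLT.sum
  intro d hd
  rw [MvPolynomial.aeval_monomial, MvPolynomial.monomial_eq, MvPolynomial.algebraMap_eq,
    ← mul_sub]
  have h1 : WLT mu (0 + monWeight mu d) (MvPolynomial.C (coeff d f)
      * ((d.prod fun i k => v i ^ k) - d.prod fun i k => MvPolynomial.X i ^ k)) :=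
    (WEQ.C _).wle.mul_wlt (WLT_prod_sub_prod hv d)
  rw [zero_add] at h1
  exact WLT.mono (hf d hd) h1

end GAux

namespace GAux

variable {K : Type*} [CommRing K] {σ : Type*} {lam : σ → ℤ}

/-- Dehomogenization: evaluate the auxiliary variable at 1. -/
def ppi (F : Polynomial (MvPolynomial σ K)) : MvPolynomial σ K :=
  F.eval 1

/-- `F` is "weighted homogeneous of total weight `w`" where the auxiliary variable has
weight 1. -/
def PW (lam : σ → ℤ) (w : ℤ) (F : Polynomial (MvPolynomial σ K)) : Prop :=
  ∀ a : ℕ, WEQ lam (w - a) (F.coeff a)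

/-- The total-weight-`w` component. -/
def pcomp (lam : σ → ℤ) (w : ℤ) (F : Polynomial (MvPolynomial σ K)) :
    Polynomial (MvPolynomial σ K) :=
  ∑ a ∈ F.support, Polynomial.C (comp lam (w - a) (F.coeff a)) * Polynomial.X ^ a

/-- Homogenization of `P` at level `w`. -/
def homogAt (lam : σ → ℤ) (w : ℤ) (P : MvPolynomial σ K) : Polynomial (MvPolynomial σ K) :=
  ∑ d ∈ P.support,
    Polynomial.C (monomial d (coeff d P)) * Polynomial.X ^ ((w - monWeight lam d).toNat)

theorem ppi_add (F G : Polynomial (MvPolynomial σ K)) : ppi (F + G) = ppi F + ppi G :=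
  Polynomial.eval_add

theorem ppi_mul (F G : Polynomial (MvPolynomial σ K)) : ppi (F * G) = ppi F * ppi G :=
  Polynomial.eval_mul

theorem ppi_sum {ι : Type*} (s : Finset ι) (f : ι → Polynomial (MvPolynomial σ K)) :
    ppi (∑ i ∈ s, f i) = ∑ i ∈ s, ppi (f i) :=
  Polynomial.eval_finset_sum _ _ _

theorem ppi_eq_sum_coeff (F : Polynomial (MvPolynomial σ K)) :
    ppi F = ∑ a ∈ F.support, F.coeff a := by
  rw [ppi, Polynomial.eval_eq_sum, Polynomial.sum]
  exact Finset.sum_congr rfl fun a _ => by rw [one_pow, mul_one]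

theorem coeff_pcomp (w : ℤ) (F : Polynomial (MvPolynomial σ K)) (a : ℕ) :
    (pcomp lam w F).coeff a = comp lam (w - a) (F.coeff a) := by
  classical
  rw [pcomp, Polynomial.finset_sum_coeff]
  have : ∀ a' ∈ F.support,
      (Polynomial.C (comp lam (w - a') (F.coeff a')) * Polynomial.X ^ a').coeff a
        = if a = a' then comp lam (w - a') (F.coeff a') else 0 := by
    intro a' _
    rw [Polynomial.coeff_C_mul, Polynomial.coeff_X_pow]
    split <;> simp
  rw [Finset.sum_congr rfl this, Finset.sum_ite_eq F.support a _]
  by_cases ha : a ∈ F.support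
  · rw [if_pos ha]
  · rw [if_neg ha, Polynomial.notMem_support_iff.1 ha, comp_zero]

theorem PW_pcomp (w : ℤ) (F : Polynomial (MvPolynomial σ K)) : PW lam w (pcomp lam w F) :=
  fun a => by rw [coeff_pcomp]; exact comp_WEQ _ _

@[simp] theorem pcomp_zero (w : ℤ) : pcomp lam w (0 : Polynomial (MvPolynomial σ K)) = 0 := by
  apply Polynomial.ext
  intro a
  rw [coeff_pcomp]
  simp

theorem pcomp_add (w : ℤ) (F G : Polynomial (MvPolynomial σ K)) :
    pcomp lam w (F + G) = pcomp lam w F + pcomp lam w G := by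
  ext a
  rw [Polynomial.coeff_add, coeff_pcomp, coeff_pcomp, coeff_pcomp, Polynomial.coeff_add,
    comp_add]

theorem pcomp_fsum {ι : Type*} (w : ℤ) (s : Finset ι) (f : ι → Polynomial (MvPolynomial σ K)) :
    pcomp lam w (∑ i ∈ s, f i) = ∑ i ∈ s, pcomp lam w (f i) := by
  classical
  induction s using Finset.induction_on with
  | empty =>
      simp only [Finset.sum_empty]
      exact pcomp_zero w
  | insert _ _ hni ih =>
      rename_i i s
      rw [Finset.sum_insert hni, Finset.sum_insert hni, pcomp_add, ih]

theorem PW.pcomp_same {w : ℤ} {F : Polynomial (MvPolynomial σ K)} (hF : PW lam w F) :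
    pcomp lam w F = F := by
  ext a
  rw [coeff_pcomp, (hF a).comp_same]

theorem PW.pcomp_ne {w w' : ℤ} {F : Polynomial (MvPolynomial σ K)} (hF : PW lam w' F)
    (h : w ≠ w') : pcomp lam w F = 0 := by
  ext a
  rw [coeff_pcomp, (hF a).comp_ne (by omega), Polynomial.coeff_zero]

theorem PW.zero {w : ℤ} : PW lam w (0 : Polynomial (MvPolynomial σ K)) := by
  intro a; rw [Polynomial.coeff_zero]; exact WEQ.zero

theorem PW.add {w : ℤ} {F G : Polynomial (MvPolynomial σ K)} (hF : PW lam w F)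
    (hG : PW lam w G) : PW lam w (F + G) := by
  intro a; rw [Polynomial.coeff_add]; exact (hF a).add (hG a)

theorem PW.sum {w : ℤ} {ι : Type*} {s : Finset ι} {f : ι → Polynomial (MvPolynomial σ K)}
    (h : ∀ i ∈ s, PW lam w (f i)) : PW lam w (∑ i ∈ s, f i) := by
  classical
  induction s using Finset.induction_on with
  | empty => simpa using PW.zero
  | insert _ _ hni ih =>
      rename_i i s
      rw [Finset.sum_insert hni]
      exact (h i (Finset.mem_insert_self i s)).add
        (ih fun j hj => h j (Finset.mem_insert_of_mem hj))

theorem PW_C {b : ℤ} {s : MvPolynomial σ K} (hs : WEQ lam b s) :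
    PW lam b (Polynomial.C s) := by
  intro a
  rw [Polynomial.coeff_C]
  by_cases h : a = 0
  · subst h; simpa using hs
  · rw [if_neg h]; exact WEQ.zero

theorem PW_X : PW lam 1 (Polynomial.X : Polynomial (MvPolynomial σ K)) := by
  intro a
  rw [Polynomial.coeff_X]
  by_cases h : 1 = a
  · rw [if_pos h, ← h]
    simpa using WEQ.one
  · rw [if_neg h]; exact WEQ.zero

theorem PW.mul {b c : ℤ} {F G : Polynomial (MvPolynomial σ K)} (hF : PW lam b F)
    (hG : PW lam c G) : PW lam (b + c) (F * G) := by
  intro n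
  rw [Polynomial.coeff_mul]
  apply WEQ.sum
  intro p hp
  have hpn : p.1 + p.2 = n := Finset.HasAntidiagonal.mem_antidiagonal.1 hp
  have := (hF p.1).mul (hG p.2)
  rwa [show b - p.1 + (c - p.2) = b + c - n by
    have : (p.1 : ℤ) + (p.2 : ℤ) = (n : ℤ) := by exact_mod_cast congrArg Nat.cast hpn
    omega] at this

theorem PW.comp_ppi {w : ℤ} {F : Polynomial (MvPolynomial σ K)} (hF : PW lam w F) (a : ℕ) :
    comp lam (w - a) (ppi F) = F.coeff a := by
  classical
  rw [ppi_eq_sum_coeff, comp_finsum]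
  have : ∀ a' ∈ F.support,
      comp lam (w - a) (F.coeff a') = if a = a' then F.coeff a' else 0 := by
    intro a' _
    by_cases h : a = a'
    · rw [if_pos h, h, (hF a').comp_same]
    · rw [if_neg h, (hF a').comp_ne (by omega)]
  rw [Finset.sum_congr rfl this, Finset.sum_ite_eq F.support a _]
  by_cases ha : a ∈ F.support
  · rw [if_pos ha]
  · rw [if_neg ha, Polynomial.notMem_support_iff.1 ha]

theorem PW_ext {w : ℤ} {F G : Polynomial (MvPolynomial σ K)} (hF : PW lam w F)
    (hG : PW lam w G) (h : ppi F = ppi G) : F = G := by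
  ext a
  rw [← hF.comp_ppi a, ← hG.comp_ppi a, h]

theorem PW.wle_ppi {w : ℤ} {F : Polynomial (MvPolynomial σ K)} (hF : PW lam w F) :
    WLE lam w (ppi F) := by
  rw [ppi_eq_sum_coeff]
  apply WLE.sum
  intro a _
  exact WLE.mono (by omega) (hF a).wle

theorem PW_homogAt {w : ℤ} {P : MvPolynomial σ K} (hP : WLE lam w P) :
    PW lam w (homogAt lam w P) := by
  intro a
  rw [homogAt, Polynomial.finset_sum_coeff]
  apply WEQ.sum
  intro d hd
  rw [Polynomial.coeff_C_mul, Polynomial.coeff_X_pow]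
  by_cases h : a = (w - monWeight lam d).toNat
  · rw [if_pos h, mul_one]
    refine WEQ.monomial ?_ _
    have h1 : monWeight lam d ≤ w := hP d hd
    omega
  · rw [if_neg h, mul_zero]; exact WEQ.zero

theorem ppi_homogAt {w : ℤ} (P : MvPolynomial σ K) : ppi (homogAt lam w P) = P := by
  rw [homogAt, ppi_sum]
  have : ∀ d ∈ P.support,
      ppi (Polynomial.C (monomial d (coeff d P))
        * Polynomial.X ^ ((w - monWeight lam d).toNat)) = monomial d (coeff d P) := by
    intro d _
    rw [ppi, Polynomial.eval_mul, Polynomial.eval_C, Polynomial.eval_pow, Polynomial.eval_X,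
      one_pow, mul_one]
  rw [Finset.sum_congr rfl this, MvPolynomial.support_sum_monomial_coeff]

@[simp] theorem homogAt_zero (w : ℤ) : homogAt lam w (0 : MvPolynomial σ K) = 0 := by
  rw [homogAt]
  simp

theorem PW.eq_homogAt {w : ℤ} {F : Polynomial (MvPolynomial σ K)} (hF : PW lam w F) :
    F = homogAt lam w (ppi F) :=
  PW_ext hF (PW_homogAt hF.wle_ppi) (by rw [ppi_homogAt])

theorem X_mul_homogAt {w : ℤ} {P : MvPolynomial σ K} (hP : WLE lam w P) :
    Polynomial.X * homogAt lam w P = homogAt lam (w + 1) P := by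
  have h1 : PW lam (w + 1) (Polynomial.X * homogAt lam w P) := by
    have := PW_X.mul (PW_homogAt hP)
    rwa [add_comm] at this
  exact PW_ext h1 (PW_homogAt (hP.mono (by omega)))
    (by rw [ppi_mul, ppi_homogAt, ppi_homogAt, ppi, Polynomial.eval_X, one_mul])

theorem X_pow_mul_homogAt {w : ℤ} {P : MvPolynomial σ K} (hP : WLE lam w P) (n : ℕ) :
    Polynomial.X ^ n * homogAt lam w P = homogAt lam (w + n) P := by
  induction n with
  | zero => rw [pow_zero, one_mul]; norm_num
  | succ n ih =>
      rw [pow_succ, mul_comm (Polynomial.X ^ n) Polynomial.X, mul_assoc, ih,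
        X_mul_homogAt (hP.mono (by omega))]
      congr 1
      push_cast
      ring

end GAux

namespace GAux

variable {K : Type*} [CommRing K] {σ : Type*} {lam : σ → ℤ}

theorem ppi_C (s : MvPolynomial σ K) : ppi (Polynomial.C s) = s := Polynomial.eval_C

theorem ppi_X : ppi (Polynomial.X : Polynomial (MvPolynomial σ K)) = 1 := Polynomial.eval_X

theorem sum_comp_shift {A : Finset ℤ} {c : ℤ} {X : MvPolynomial σ K}
    (h : ∀ d ∈ X.support, monWeight lam d + c ∈ A) :
    ∑ w ∈ A, comp lam (w - c) X = X := by
  classical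
  ext e
  rw [MvPolynomial.coeff_sum]
  have : ∀ w ∈ A, coeff e (comp lam (w - c) X)
      = if monWeight lam e + c = w then coeff e X else 0 := by
    intro w _
    rw [coeff_comp]
    by_cases hc : monWeight lam e = w - c
    · rw [if_pos hc, if_pos (by omega)]
    · rw [if_neg hc, if_neg (by omega)]
  rw [Finset.sum_congr rfl this, Finset.sum_ite_eq A (monWeight lam e + c) _]
  by_cases he : e ∈ X.support
  · rw [if_pos (h e he)]
  · rw [MvPolynomial.notMem_support_iff.1 he]; split <;> rfl

/-- The finite set of total weights appearing in `F`. -/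
def wset (lam : σ → ℤ) (F : Polynomial (MvPolynomial σ K)) : Finset ℤ :=
  F.support.biUnion fun a => (F.coeff a).support.image fun d => monWeight lam d + a

theorem sum_pcomp (F : Polynomial (MvPolynomial σ K)) :
    ∑ w ∈ wset lam F, pcomp lam w F = F := by
  classical
  apply Polynomial.ext
  intro a
  rw [Polynomial.finset_sum_coeff]
  have : ∀ w ∈ wset lam F, (pcomp lam w F).coeff a = comp lam (w - a) (F.coeff a) :=
    fun w _ => coeff_pcomp w F a
  rw [Finset.sum_congr rfl this]
  apply sum_comp_shift
  intro d hd
  have ha : a ∈ F.support := by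
    rw [Polynomial.mem_support_iff]
    intro h0
    rw [h0] at hd
    simp at hd
  exact Finset.mem_biUnion.2 ⟨a, ha, Finset.mem_image_of_mem _ hd⟩

theorem pcomp_mul_homog {b : ℤ} {H : Polynomial (MvPolynomial σ K)} (hH : PW lam b H)
    (w : ℤ) (Q : Polynomial (MvPolynomial σ K)) :
    pcomp lam w (Q * H) = pcomp lam (w - b) Q * H := by
  classical
  apply Polynomial.ext
  intro n
  rw [coeff_pcomp, Polynomial.coeff_mul, Polynomial.coeff_mul, comp_finsum]
  apply Finset.sum_congr rfl
  intro p hp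
  have hpn : (p.1 : ℤ) + (p.2 : ℤ) = (n : ℤ) := by
    exact_mod_cast congrArg Nat.cast (Finset.HasAntidiagonal.mem_antidiagonal.1 hp)
  rw [comp_mul_homog (hH p.2), coeff_pcomp]
  congr 2
  omega

/-- The homogenization of the ideal `J`. -/
def Jhat (lam : σ → ℤ) (J : Ideal (MvPolynomial σ K)) :
    Ideal (Polynomial (MvPolynomial σ K)) where
  carrier := {F | ∀ w : ℤ, ppi (pcomp lam w F) ∈ J}
  zero_mem' := by
    intro w
    rw [pcomp_zero]
    simpa [ppi] using J.zero_mem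
  add_mem' := by
    intro F G hF hG w
    rw [pcomp_add, ppi_add]
    exact J.add_mem (hF w) (hG w)
  smul_mem' := by
    intro r F hF w
    rw [smul_eq_mul]
    have hrw : r * F = ∑ w1 ∈ wset lam r, pcomp lam w1 r * F := by
      rw [← Finset.sum_mul, sum_pcomp]
    rw [hrw, pcomp_fsum, ppi_sum]
    apply Ideal.sum_mem
    intro w1 _
    rw [mul_comm (pcomp lam w1 r) F, pcomp_mul_homog (PW_pcomp w1 r), ppi_mul]
    exact Ideal.mul_mem_right _ _ (hF (w - w1))

theorem mem_Jhat_iff {J : Ideal (MvPolynomial σ K)} {F : Polynomial (MvPolynomial σ K)} :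
    F ∈ Jhat lam J ↔ ∀ w : ℤ, ppi (pcomp lam w F) ∈ J := Iff.rfl

theorem PW.ppi_mem_of_mem_Jhat {J : Ideal (MvPolynomial σ K)} {w : ℤ}
    {F : Polynomial (MvPolynomial σ K)} (hFw : PW lam w F) (hF : F ∈ Jhat lam J) :
    ppi F ∈ J := by
  have := hF w
  rwa [hFw.pcomp_same] at this

theorem PW.mem_Jhat_of_ppi {J : Ideal (MvPolynomial σ K)} {w : ℤ}
    {F : Polynomial (MvPolynomial σ K)} (hFw : PW lam w F) (hP : ppi F ∈ J) :
    F ∈ Jhat lam J := by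
  intro w'
  by_cases h : w' = w
  · rwa [h, hFw.pcomp_same]
  · rw [hFw.pcomp_ne h]
    simpa [ppi] using J.zero_mem

theorem homogAt_mem_Jhat {J : Ideal (MvPolynomial σ K)} {w : ℤ} {P : MvPolynomial σ K}
    (hP : P ∈ J) (hw : WLE lam w P) : homogAt lam w P ∈ Jhat lam J :=
  (PW_homogAt hw).mem_Jhat_of_ppi (by rwa [ppi_homogAt])

theorem pcomp_mem_Jhat {J : Ideal (MvPolynomial σ K)} {F : Polynomial (MvPolynomial σ K)}
    (hF : F ∈ Jhat lam J) (w : ℤ) : pcomp lam w F ∈ Jhat lam J :=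
  (PW_pcomp w F).mem_Jhat_of_ppi (hF w)

end GAux

namespace GAux

variable {K : Type*} [CommRing K] {σ : Type*} {lam : σ → ℤ} {N : ℕ}

/-- Homogenizations of the generators. -/
def ghat (lam : σ → ℤ) (g : Fin N → MvPolynomial σ K) (l : Fin N) :
    Polynomial (MvPolynomial σ K) :=
  homogAt lam (maxWeight lam (g l)) (g l)

def Vhat (lam : σ → ℤ) (g : Fin N → MvPolynomial σ K) :
    Ideal (Polynomial (MvPolynomial σ K)) :=
  Ideal.span (Set.range (ghat lam g))

theorem PW_ghat (g : Fin N → MvPolynomial σ K) (l : Fin N) :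
    PW lam (maxWeight lam (g l)) (ghat lam g l) :=
  PW_homogAt (WLE_maxWeight (g l))

theorem ppi_ghat (g : Fin N → MvPolynomial σ K) (l : Fin N) : ppi (ghat lam g l) = g l :=
  ppi_homogAt (g l)

variable {g : Fin N → MvPolynomial σ K}

theorem step_b (hg0 : ∀ l, g l ≠ 0)
    (hGB : initialIdeal lam (Ideal.span (Set.range g))
      = Ideal.span (Set.range fun l => initialForm lam (g l)))
    {w : ℤ} {F : Polynomial (MvPolynomial σ K)}
    (hF : F ∈ Jhat lam (Ideal.span (Set.range g))) (hFw : PW lam w F) :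
    F ∈ Vhat lam g ⊔ Ideal.span {Polynomial.X} * Jhat lam (Ideal.span (Set.range g)) := by
  classical
  set J := Ideal.span (Set.range g) with hJdef
  by_cases hF0 : F = 0
  · rw [hF0]; exact Submodule.zero_mem _
  set P := ppi F with hPdef
  have hPJ : P ∈ J := hFw.ppi_mem_of_mem_Jhat hF
  have hPle : WLE lam w P := hFw.wle_ppi
  have hFP : F = homogAt lam w P := hFw.eq_homogAt
  have hP0 : P ≠ 0 := fun h0 => hF0 (by rw [hFP, h0, homogAt_zero])
  have hw0 : maxWeight lam P ≤ w := maxWeight_le hP0 hPle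
  by_cases heq : maxWeight lam P = w
  · -- top weight case; use the Gröbner basis hypothesis
    have hinP : initialForm lam P ∈ Ideal.span (Set.range fun l => initialForm lam (g l)) := by
      rw [← hGB]
      exact Ideal.subset_span ⟨P, hPJ, hP0, rfl⟩
    obtain ⟨c, hc⟩ := (Submodule.mem_span_range_iff_exists_fun _).1 hinP
    have hcmul : ∑ l, c l * initialForm lam (g l) = initialForm lam P := by
      rw [← hc]
      exact Finset.sum_congr rfl fun l _ => (smul_eq_mul (α := MvPolynomial σ K) _ _).symm
    set c' : Fin N → MvPolynomial σ K :=
      fun l => comp lam (w - maxWeight lam (g l)) (c l) with hc'def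
    have hc' : ∑ l, c' l * initialForm lam (g l) = initialForm lam P := by
      have h2 : comp lam w (∑ l, c l * initialForm lam (g l))
          = ∑ l, c' l * initialForm lam (g l) := by
        rw [comp_finsum]
        exact Finset.sum_congr rfl fun l _ => by
          rw [comp_mul_homog (WEQ_initialForm (g l))]
      have h3 : comp lam w (initialForm lam P) = initialForm lam P := by
        have hweq : WEQ lam w (initialForm lam P) := by
          rw [← heq]; exact WEQ_initialForm P
        exact hweq.comp_same
      calc ∑ l, c' l * initialForm lam (g l)
          = comp lam w (∑ l, c l * initialForm lam (g l)) := h2.symm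
        _ = comp lam w (initialForm lam P) := by rw [hcmul]
        _ = initialForm lam P := h3
    set P' := P - ∑ l, c' l * g l with hP'def
    have hP'J : P' ∈ J := Submodule.sub_mem _ hPJ
      (Ideal.sum_mem _ fun l _ =>
        Ideal.mul_mem_left _ _ (Ideal.subset_span ⟨l, rfl⟩))
    have hP'lt : WLT lam w P' := by
      have hkey : P' = (P - initialForm lam P)
          - ∑ l, c' l * (g l - initialForm lam (g l)) := by
        simp only [mul_sub, Finset.sum_sub_distrib]
        rw [hc', hP'def]
        ring
      rw [hkey]
      refine WLT.sub ?_ (WLT.sum fun l _ => ?_)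
      · have := WLT_sub_initialForm (lam := lam) hP0
        rwa [heq] at this
      · have hlt := WLT_sub_initialForm (lam := lam) (hg0 l)
        have := (comp_WEQ (w - maxWeight lam (g l)) (c l)).wle.mul_wlt hlt
        rwa [sub_add_cancel] at this
    have hle1 : WLE lam (w - 1) P' := WLT_iff_WLE_sub_one.1 hP'lt
    have hsplit : F = (∑ l, Polynomial.C (c' l) * ghat lam g l)
        + Polynomial.X * homogAt lam (w - 1) P' := by
      refine PW_ext hFw ?_ ?_
      · apply PW.add
        · apply PW.sum; intro l _
          have := (PW_C (comp_WEQ (w - maxWeight lam (g l)) (c l))).mul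
            (PW_ghat (lam := lam) g l)
          rwa [sub_add_cancel] at this
        · have := PW_X.mul (PW_homogAt hle1)
          rwa [show (1 : ℤ) + (w - 1) = w by ring] at this
      · rw [ppi_add, ppi_mul, ppi_X, one_mul, ppi_homogAt, ppi_sum,
          Finset.sum_congr rfl (fun l _ => by rw [ppi_mul, ppi_C, ppi_ghat]), hP'def]
        ring
    rw [hsplit]
    exact Submodule.add_mem _
      (Ideal.mem_sup_left (Ideal.sum_mem _ fun l _ =>
        Ideal.mul_mem_left _ _ (Ideal.subset_span ⟨l, rfl⟩)))
      (Ideal.mem_sup_right (Ideal.mul_mem_mul (Ideal.subset_span rfl)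
        (homogAt_mem_Jhat hP'J hle1)))
  · -- strictly smaller top weight: divisible by X
    have hlt : maxWeight lam P < w := lt_of_le_of_ne hw0 heq
    have hle1 : WLE lam (w - 1) P := fun d hd => by
      have h1 := le_maxWeight (lam := lam) hd
      omega
    have hXdvd : F = Polynomial.X * homogAt lam (w - 1) P := by
      rw [X_mul_homogAt hle1, sub_add_cancel, hFP]
    rw [hXdvd]
    exact Ideal.mem_sup_right (Ideal.mul_mem_mul (Ideal.subset_span rfl)
      (homogAt_mem_Jhat hPJ hle1))

theorem step_c {w : ℤ} {F : Polynomial (MvPolynomial σ K)}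
    (hF : F ∈ Jhat lam (Ideal.span (Set.range g))) (hFw : PW lam w F) :
    ∃ n : ℕ, (Polynomial.X : Polynomial (MvPolynomial σ K)) ^ n * F ∈ Vhat lam g := by
  classical
  by_cases hF0 : F = 0
  · exact ⟨0, by rw [hF0, mul_zero]; exact Submodule.zero_mem _⟩
  set P := ppi F with hPdef
  have hPJ : P ∈ Ideal.span (Set.range g) := hFw.ppi_mem_of_mem_Jhat hF
  have hPle : WLE lam w P := hFw.wle_ppi
  have hFP : F = homogAt lam w P := hFw.eq_homogAt
  obtain ⟨h, hh⟩ := (Submodule.mem_span_range_iff_exists_fun _).1 hPJ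
  set n : ℕ := ∑ l, (maxWeight lam (h l) + maxWeight lam (g l) - w).toNat with hn
  have hwle : ∀ l, WLE lam (w + n - maxWeight lam (g l)) (h l) := by
    intro l d hd
    have h1 : monWeight lam d ≤ maxWeight lam (h l) := le_maxWeight hd
    have h2 : (maxWeight lam (h l) + maxWeight lam (g l) - w).toNat ≤ n :=
      Finset.single_le_sum (f := fun l => (maxWeight lam (h l) + maxWeight lam (g l) - w).toNat)
        (fun _ _ => Nat.zero_le _) (Finset.mem_univ l)
    have h3 := Int.self_le_toNat (maxWeight lam (h l) + maxWeight lam (g l) - w)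
    have h4 : (((maxWeight lam (h l) + maxWeight lam (g l) - w).toNat : ℤ)) ≤ (n : ℤ) := by
      exact_mod_cast h2
    omega
  refine ⟨n, ?_⟩
  rw [hFP, X_pow_mul_homogAt hPle n]
  have hdecomp : homogAt lam (w + n) P
      = ∑ l, homogAt lam (w + n - maxWeight lam (g l)) (h l) * ghat lam g l := by
    refine PW_ext (PW_homogAt (hPle.mono (by omega))) (PW.sum fun l _ => ?_) ?_
    · have := (PW_homogAt (hwle l)).mul (PW_ghat (lam := lam) g l)
      rwa [sub_add_cancel] at this
    · rw [ppi_homogAt, ppi_sum,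
        Finset.sum_congr rfl (fun l _ => by rw [ppi_mul, ppi_homogAt, ppi_ghat]), ← hh]
      exact Finset.sum_congr rfl fun l _ => (smul_eq_mul (α := MvPolynomial σ K) _ _).symm
  rw [hdecomp]
  exact Submodule.sum_mem _ fun l _ =>
    Ideal.mul_mem_left _ _ (Ideal.subset_span ⟨l, rfl⟩)

end GAux

namespace GAux

variable {K : Type*} [CommRing K] {σ : Type*} {lam : σ → ℤ} {N : ℕ}
variable {g : Fin N → MvPolynomial σ K}

theorem Jhat_le_Vhat [Finite σ] [IsNoetherianRing K] (hg0 : ∀ l, g l ≠ 0)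
    (hGB : initialIdeal lam (Ideal.span (Set.range g))
      = Ideal.span (Set.range fun l => initialForm lam (g l))) :
    Jhat lam (Ideal.span (Set.range g)) ≤ Vhat lam g := by
  classical
  set J := Ideal.span (Set.range g) with hJdef
  set SS := Polynomial (MvPolynomial σ K) with hSSdef
  haveI : IsNoetherianRing SS := by
    haveI : IsNoetherianRing (MvPolynomial σ K) := MvPolynomial.isNoetherianRing
    exact Polynomial.isNoetherianRing
  set Vs : Submodule SS SS := (Vhat lam g : Ideal SS) with hVsdef
  set q : SS →ₗ[SS] SS ⧸ Vs := Vs.mkQ with hqdef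
  set Nmod : Submodule SS (SS ⧸ Vs) := Submodule.map q (Jhat lam J) with hNdef
  have hNfg : Nmod.FG := Submodule.FG.map _ (IsNoetherian.noetherian _)
  have hle : Nmod ≤ (Ideal.span {(Polynomial.X : SS)}) • Nmod := by
    rintro y hy
    obtain ⟨F, hF, rfl⟩ := Submodule.mem_map.1 hy
    have hFsup : F ∈ (Vhat lam g) ⊔ (Ideal.span {(Polynomial.X : SS)} * Jhat lam J) := by
      have hFdec : F = ∑ w ∈ wset lam F, pcomp lam w F := (sum_pcomp F).symm
      rw [hFdec]
      exact Submodule.sum_mem _ fun w _ =>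
        step_b hg0 hGB (pcomp_mem_Jhat hF w) (PW_pcomp w F)
    obtain ⟨F1, hF1, F2, hF2, rfl⟩ := Submodule.mem_sup.1 hFsup
    have h1 : q F1 = 0 := by
      rw [hqdef, Submodule.mkQ_apply, Submodule.Quotient.mk_eq_zero]
      exact hF1
    rw [map_add, h1, zero_add]
    have h2 : F2 ∈ (Ideal.span {(Polynomial.X : SS)}) • (Jhat lam J : Ideal SS) := by
      rw [Ideal.smul_eq_mul]
      exact hF2
    have h3 := Submodule.mem_map_of_mem (f := q) h2
    rwa [Submodule.map_smul''] at h3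
  obtain ⟨r, hr1, hr0⟩ :=
    Submodule.exists_sub_one_mem_and_smul_eq_zero_of_fg_of_le_smul _ Nmod hNfg hle
  have h1r : (1 : SS) - r ∈ Ideal.span {(Polynomial.X : SS)} := by
    have : (1 : SS) - r = -(r - 1) := by ring
    rw [this]
    exact Submodule.neg_mem _ hr1
  obtain ⟨cX, hcX⟩ := Ideal.mem_span_singleton'.1 h1r
  have key : ∀ {w : ℤ} {H : SS}, H ∈ Jhat lam J → PW lam w H → H ∈ Vhat lam g := by
    intro w H hH hHw
    obtain ⟨n, hn⟩ := step_c hH hHw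
    set y : SS ⧸ Vs := q H with hydef
    have hy : y ∈ Nmod := Submodule.mem_map_of_mem hH
    have hself : ∀ z ∈ Nmod, ((1 : SS) - r) • z = z := by
      intro z hz
      rw [sub_smul, one_smul, hr0 z hz, sub_zero]
    have hiter : ∀ m : ℕ, (((1 : SS) - r) ^ m) • y = y := by
      intro m
      induction m with
      | zero => rw [pow_zero, one_smul]
      | succ m ih =>
          rw [pow_succ, mul_smul, hself y hy, ih]
    have hXn : q ((Polynomial.X : SS) ^ n * H) = 0 := by
      rw [hqdef, Submodule.mkQ_apply, Submodule.Quotient.mk_eq_zero]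
      exact hn
    have hy0 : y = 0 := by
      calc y = (((1 : SS) - r) ^ n) • y := (hiter n).symm
        _ = ((cX * Polynomial.X) ^ n) • y := by rw [hcX]
        _ = (cX ^ n * Polynomial.X ^ n) • y := by rw [mul_pow]
        _ = cX ^ n • ((Polynomial.X : SS) ^ n • y) := by rw [mul_smul]
        _ = cX ^ n • (q ((Polynomial.X : SS) ^ n * H)) := by
            rw [hydef, ← map_smul, smul_eq_mul]
        _ = cX ^ n • (0 : SS ⧸ Vs) := by rw [hXn]
        _ = 0 := smul_zero _
    have : H ∈ Vs := by
      rw [← Submodule.Quotient.mk_eq_zero, ← Submodule.mkQ_apply]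
      exact hy0
    exact this
  intro F hF
  have hFdec : F = ∑ w ∈ wset lam F, pcomp lam w F := (sum_pcomp F).symm
  rw [hFdec]
  exact Submodule.sum_mem _ fun w _ => key (pcomp_mem_Jhat hF w) (PW_pcomp w F)

/-- Standard representations with weight bounds exist (Macaulay/Gröbner basis property). -/
theorem Lstd [Finite σ] [IsNoetherianRing K] (hg0 : ∀ l, g l ≠ 0)
    (hGB : initialIdeal lam (Ideal.span (Set.range g))
      = Ideal.span (Set.range fun l => initialForm lam (g l)))
    {P : MvPolynomial σ K} (hP : P ∈ Ideal.span (Set.range g)) {w : ℤ}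
    (hw : WLE lam w P) :
    ∃ c : Fin N → MvPolynomial σ K, P = ∑ l, c l * g l
      ∧ ∀ l, WLE lam (w - maxWeight lam (g l)) (c l) := by
  classical
  have hFJ : homogAt lam w P ∈ Jhat lam (Ideal.span (Set.range g)) :=
    homogAt_mem_Jhat hP hw
  have hFV : homogAt lam w P ∈ Vhat lam g := Jhat_le_Vhat hg0 hGB hFJ
  obtain ⟨Q, hQ⟩ := (Submodule.mem_span_range_iff_exists_fun _).1 hFV
  have hQ' : ∑ l, Q l * ghat lam g l = homogAt lam w P := by
    rw [← hQ]
    exact Finset.sum_congr rfl fun l _ => (smul_eq_mul (α := Polynomial (MvPolynomial σ K)) _ _)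
  have hstep : ∑ l, pcomp lam (w - maxWeight lam (g l)) (Q l) * ghat lam g l
      = homogAt lam w P := by
    have h1 : pcomp lam w (∑ l, Q l * ghat lam g l) = homogAt lam w P := by
      rw [hQ', (PW_homogAt hw).pcomp_same]
    rw [← h1, pcomp_fsum]
    exact Finset.sum_congr rfl fun l _ => by
      rw [pcomp_mul_homog (PW_ghat (lam := lam) g l)]
  refine ⟨fun l => ppi (pcomp lam (w - maxWeight lam (g l)) (Q l)), ?_, ?_⟩
  · have := congrArg ppi hstep
    rw [ppi_sum, ppi_homogAt] at this
    rw [← this]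
    exact Finset.sum_congr rfl fun l _ => by rw [ppi_mul, ppi_ghat]
  · intro l
    exact (PW_pcomp _ (Q l)).wle_ppi

end GAux

namespace GAux

section Main

variable {k : Type*} [Field k] {q N : ℕ}

local notation "S" => MvPolynomial (Fin q) k
local notation "T" => MvPolynomial (Fin q ⊕ Fin N) k

variable (lam : Fin q → ℤ) (g : Fin N → MvPolynomial (Fin q) k)

/-- the extended weight function -/
def Lam : (Fin q ⊕ Fin N) → ℤ := Sum.elim lam fun l => maxWeight lam (g l)

def eta : MvPolynomial (Fin q ⊕ Fin N) k →ₐ[k] MvPolynomial (Fin q) k :=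
  aeval (Sum.elim X 0)

def evg : MvPolynomial (Fin q ⊕ Fin N) k →ₐ[k] MvPolynomial (Fin q) k :=
  aeval (Sum.elim X g)

def psi : MvPolynomial (Fin q ⊕ Fin N) k →ₐ[k] MvPolynomial (Fin q ⊕ Fin N) k :=
  aeval (Sum.elim (fun j => X (Sum.inl j))
    (fun l => X (Sum.inr l) - rename Sum.inl (g l - initialForm lam (g l))))

def psiinv : MvPolynomial (Fin q ⊕ Fin N) k →ₐ[k] MvPolynomial (Fin q ⊕ Fin N) k :=
  aeval (Sum.elim (fun j => X (Sum.inl j))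
    (fun l => X (Sum.inr l) + rename Sum.inl (g l - initialForm lam (g l))))

/-- the span of the auxiliary variables -/
def SpanEps : Ideal (MvPolynomial (Fin q ⊕ Fin N) k) :=
  Ideal.span (Set.range fun l : Fin N => (X (Sum.inr l) : MvPolynomial (Fin q ⊕ Fin N) k))

theorem aeval_elim_rename (u : Fin N → MvPolynomial (Fin q) k) (s : S) :
    aeval (Sum.elim X u) (rename Sum.inl s) = s := by
  rw [MvPolynomial.aeval_rename, Sum.elim_comp_inl]
  exact MvPolynomial.aeval_X_left_apply s

theorem evg_rename (s : S) : evg (k := k) g (rename Sum.inl s) = s :=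
  aeval_elim_rename g s

theorem eta_rename (s : S) : eta (k := k) (q := q) (N := N) (rename Sum.inl s) = s :=
  aeval_elim_rename 0 s

@[simp] theorem eta_X_inr (l : Fin N) : eta (k := k) (q := q) (X (Sum.inr l) : T) = 0 := by
  unfold eta
  simp

@[simp] theorem eta_X_inl (j : Fin q) :
    eta (k := k) (N := N) (X (Sum.inl j) : T) = X j := by
  unfold eta
  simp

@[simp] theorem evg_X_inr (l : Fin N) : evg (k := k) g (X (Sum.inr l) : T) = g l := by
  unfold evg
  simp

@[simp] theorem evg_X_inl (j : Fin q) : evg (k := k) g (X (Sum.inl j) : T) = X j := by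
  unfold evg
  simp

@[simp] theorem psi_X_inl (j : Fin q) :
    psi (k := k) lam g (X (Sum.inl j) : T) = X (Sum.inl j) := by
  unfold psi
  simp

@[simp] theorem psi_X_inr (l : Fin N) :
    psi (k := k) lam g (X (Sum.inr l) : T)
      = X (Sum.inr l) - rename Sum.inl (g l - initialForm lam (g l)) := by
  unfold psi
  simp

@[simp] theorem psiinv_X_inl (j : Fin q) :
    psiinv (k := k) lam g (X (Sum.inl j) : T) = X (Sum.inl j) := by
  unfold psiinv
  simp

@[simp] theorem psiinv_X_inr (l : Fin N) :
    psiinv (k := k) lam g (X (Sum.inr l) : T)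
      = X (Sum.inr l) + rename Sum.inl (g l - initialForm lam (g l)) := by
  unfold psiinv
  simp

theorem evg_psi (f : T) : evg g (psi lam g f) = evg (fun l => initialForm lam (g l)) f := by
  have hcomp : (evg g).comp (psi lam g)
      = evg (k := k) (fun l => initialForm lam (g l)) := by
    apply MvPolynomial.algHom_ext
    rintro (j | l) <;> rw [AlgHom.comp_apply]
    · rw [psi_X_inl, evg_X_inl, evg_X_inl]
    · rw [psi_X_inr, map_sub, evg_X_inr, evg_rename, evg_X_inr]
      ring
  calc evg g (psi lam g f) = ((evg g).comp (psi lam g)) f := rfl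
    _ = _ := by rw [hcomp]

theorem evgin_psiinv (f : T) :
    evg (fun l => initialForm lam (g l)) (psiinv lam g f) = evg g f := by
  have hcomp : (evg (k := k) (fun l => initialForm lam (g l))).comp (psiinv lam g)
      = evg (k := k) g := by
    apply MvPolynomial.algHom_ext
    rintro (j | l) <;> rw [AlgHom.comp_apply]
    · rw [psiinv_X_inl, evg_X_inl, evg_X_inl]
    · rw [psiinv_X_inr, map_add, evg_X_inr, evg_rename, evg_X_inr]
      ring
  calc evg (fun l => initialForm lam (g l)) (psiinv lam g f)
      = ((evg (fun l => initialForm lam (g l))).comp (psiinv lam g)) f := rfl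
    _ = _ := by rw [hcomp]

/-- every polynomial is its `ε ↦ 0` part plus something in the span of the `ε`'s -/
theorem sub_rename_eta_mem (f : T) :
    f - rename Sum.inl (eta f) ∈ SpanEps (k := k) (q := q) (N := N) := by
  induction f using MvPolynomial.induction_on with
  | C a =>
      rw [show eta (k := k) (q := q) (N := N) (MvPolynomial.C a) = MvPolynomial.C a from by
        unfold eta; rw [MvPolynomial.aeval_C, MvPolynomial.algebraMap_eq]]
      rw [MvPolynomial.rename_C, sub_self]
      exact Submodule.zero_mem _
  | add p r hp hr =>
      have h : p + r - rename Sum.inl (eta (p + r))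
          = (p - rename Sum.inl (eta p)) + (r - rename Sum.inl (eta r)) := by
        rw [map_add, map_add]; ring
      rw [h]
      exact Submodule.add_mem _ hp hr
  | mul_X p i hp =>
      cases i with
      | inl j =>
          have h : p * X (Sum.inl j) - rename Sum.inl (eta (p * X (Sum.inl j)))
              = (p - rename Sum.inl (eta p)) * X (Sum.inl j) := by
            rw [map_mul, eta_X_inl, map_mul, MvPolynomial.rename_X]
            ring
          rw [h]
          exact Ideal.mul_mem_right _ _ hp
      | inr l =>
          have h : p * X (Sum.inr l) - rename Sum.inl (eta (p * X (Sum.inr l)))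
              = p * X (Sum.inr l) := by
            rw [map_mul, eta_X_inr, mul_zero, map_zero, sub_zero]
          rw [h]
          exact Ideal.mul_mem_left _ _ (Ideal.subset_span ⟨l, rfl⟩)

theorem mem_SpanEps_of_eta_eq_zero {f : T} (h : eta f = 0) :
    f ∈ SpanEps (k := k) (q := q) (N := N) := by
  have := sub_rename_eta_mem (q := q) (N := N) f
  rwa [h, map_zero, sub_zero] at this

theorem eta_eq_zero_of_mem_SpanEps {f : T} (h : f ∈ SpanEps (k := k) (q := q) (N := N)) :
    eta f = 0 := by
  have hle : SpanEps (k := k) (q := q) (N := N)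
      ≤ RingHom.ker (eta (q := q) (N := N) (k := k) : T →ₐ[k] S) := by
    rw [SpanEps, Ideal.span_le]
    rintro x ⟨l, rfl⟩
    simp only [SetLike.mem_coe, RingHom.mem_ker]
    exact eta_X_inr l
  exact hle h

end Main

end GAux

namespace GAux

section Main2

variable {k : Type*} [Field k] {q N : ℕ}

local notation "S" => MvPolynomial (Fin q) k
local notation "T" => MvPolynomial (Fin q ⊕ Fin N) k

variable (lam : Fin q → ℤ) (g : Fin N → MvPolynomial (Fin q) k)

theorem rename_inl_aeval : (rename Sum.inl : S →ₐ[k] T)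
    = aeval (fun j => (X (Sum.inl j) : T)) := by
  apply MvPolynomial.algHom_ext
  intro j
  rw [MvPolynomial.rename_X, MvPolynomial.aeval_X]

theorem hv_rename : ∀ j : Fin q, WEQ (Lam lam g) (lam j) ((fun j => (X (Sum.inl j) : T)) j) :=
  fun j => WEQ_X (Sum.inl j)

theorem WEQ.rename_inl {w : ℤ} {s : S} (h : WEQ lam w s) :
    WEQ (Lam lam g) w (rename Sum.inl s : T) := by
  rw [show (rename Sum.inl s : T) = MvPolynomial.aeval (fun j => (X (Sum.inl j) : T)) s from by
    rw [← rename_inl_aeval]]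
  exact WEQ.aeval _ (hv_rename lam g) h

theorem WLE.rename_inl {w : ℤ} {s : S} (h : WLE lam w s) :
    WLE (Lam lam g) w (rename Sum.inl s : T) := by
  rw [show (rename Sum.inl s : T) = MvPolynomial.aeval (fun j => (X (Sum.inl j) : T)) s from by
    rw [← rename_inl_aeval]]
  exact WLE.aeval _ (fun j => (hv_rename lam g j).wle) h

theorem WLT.rename_inl {w : ℤ} {s : S} (h : WLT lam w s) :
    WLT (Lam lam g) w (rename Sum.inl s : T) := by
  rw [WLT_iff_WLE_sub_one] at h ⊢
  exact WLE.rename_inl lam g h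

theorem comp_rename_inl (w : ℤ) (s : S) :
    (rename Sum.inl (comp lam w s) : T) = comp (Lam lam g) w (rename Sum.inl s) := by
  rw [show ∀ x : S, (rename Sum.inl x : T) = MvPolynomial.aeval (fun j => (X (Sum.inl j) : T)) x from
    fun x => by rw [← rename_inl_aeval]]
  rw [show (rename Sum.inl s : T) = MvPolynomial.aeval (fun j => (X (Sum.inl j) : T)) s from by
    rw [← rename_inl_aeval]]
  exact comp_aeval _ (hv_rename lam g) w s

theorem rename_inl_ne_zero {s : S} (hs : s ≠ 0) : (rename Sum.inl s : T) ≠ 0 := by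
  intro h0
  exact hs (MvPolynomial.rename_injective Sum.inl Sum.inl_injective (by rw [h0, map_zero]))

theorem initialForm_rename_inl {s : S} (hs : s ≠ 0) :
    initialForm (Lam lam g) (rename Sum.inl s : T) = rename Sum.inl (initialForm lam s)
      ∧ maxWeight (Lam lam g) (rename Sum.inl s : T) = maxWeight lam s := by
  have hH : (rename Sum.inl (initialForm lam s) : T) ≠ 0 :=
    rename_inl_ne_zero (initialForm_ne_zero hs)
  have hWEQ : WEQ (Lam lam g) (maxWeight lam s) (rename Sum.inl (initialForm lam s) : T) :=
    WEQ.rename_inl lam g (WEQ_initialForm s)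
  have hWLT : WLT (Lam lam g) (maxWeight lam s)
      ((rename Sum.inl s : T) - rename Sum.inl (initialForm lam s)) := by
    rw [← map_sub]
    exact WLT.rename_inl lam g (WLT_sub_initialForm hs)
  have h := initialForm_add_of_WLT hH hWEQ hWLT
  rw [add_sub_cancel] at h
  exact ⟨h.1, h.2.2⟩

-- graded morphism facts for `eta`
theorem hv_eta : ∀ i : Fin q ⊕ Fin N,
    WEQ lam (Lam lam g i) (Sum.elim X (0 : Fin N → S) i) := by
  rintro (j | l)
  · exact WEQ_X j
  · exact WEQ.zero

theorem comp_eta (w : ℤ) (f : T) :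
    eta (comp (Lam lam g) w f) = comp lam w (eta f) :=
  comp_aeval _ (hv_eta lam g) w f

theorem WLE.eta_map {w : ℤ} {f : T} (h : WLE (Lam lam g) w f) : WLE lam w (eta f) :=
  WLE.aeval _ (fun i => (hv_eta lam g i).wle) h

-- graded morphism facts for `evg (in ∘ g)`
theorem hv_evgin : ∀ i : Fin q ⊕ Fin N,
    WEQ lam (Lam lam g i) (Sum.elim X (fun l => initialForm lam (g l)) i) := by
  rintro (j | l)
  · exact WEQ_X j
  · exact WEQ_initialForm (g l)

theorem comp_evgin (w : ℤ) (f : T) :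
    evg (fun l => initialForm lam (g l)) (comp (Lam lam g) w f)
      = comp lam w (evg (fun l => initialForm lam (g l)) f) :=
  comp_aeval _ (hv_evgin lam g) w f

theorem WLE.evgin_map {w : ℤ} {f : T} (h : WLE (Lam lam g) w f) :
    WLE lam w (evg (fun l => initialForm lam (g l)) f) :=
  WLE.aeval _ (fun i => (hv_evgin lam g i).wle) h

-- perturbation facts for psi / psiinv
theorem hv_psi (hg0 : ∀ l, g l ≠ 0) : ∀ i : Fin q ⊕ Fin N,
    WLT (Lam lam g) (Lam lam g i)
      ((Sum.elim (fun j => (X (Sum.inl j) : T))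
        (fun l => X (Sum.inr l) - rename Sum.inl (g l - initialForm lam (g l)))) i - X i) := by
  rintro (j | l)
  · simpa using WLT.zero
  · have h : (Sum.elim (fun j => (X (Sum.inl j) : T))
        (fun l => X (Sum.inr l) - rename Sum.inl (g l - initialForm lam (g l)))) (Sum.inr l)
        - X (Sum.inr l) = -(rename Sum.inl (g l - initialForm lam (g l))) := by
      rw [Sum.elim_inr]; ring
    rw [h]
    exact ((WLT_sub_initialForm (hg0 l)).rename_inl lam g).neg

theorem hv_psiinv (hg0 : ∀ l, g l ≠ 0) : ∀ i : Fin q ⊕ Fin N,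
    WLT (Lam lam g) (Lam lam g i)
      ((Sum.elim (fun j => (X (Sum.inl j) : T))
        (fun l => X (Sum.inr l) + rename Sum.inl (g l - initialForm lam (g l)))) i - X i) := by
  rintro (j | l)
  · simpa using WLT.zero
  · have h : (Sum.elim (fun j => (X (Sum.inl j) : T))
        (fun l => X (Sum.inr l) + rename Sum.inl (g l - initialForm lam (g l)))) (Sum.inr l)
        - X (Sum.inr l) = rename Sum.inl (g l - initialForm lam (g l)) := by
      rw [Sum.elim_inr]; ring
    rw [h]
    exact (WLT_sub_initialForm (hg0 l)).rename_inl lam g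

theorem psi_sub_self_WLT (hg0 : ∀ l, g l ≠ 0) {w : ℤ} {f : T}
    (hf : WLE (Lam lam g) w f) : WLT (Lam lam g) w (psi lam g f - f) :=
  WLT_aeval_sub_self (hv_psi lam g hg0) hf

theorem psiinv_sub_self_WLT (hg0 : ∀ l, g l ≠ 0) {w : ℤ} {f : T}
    (hf : WLE (Lam lam g) w f) : WLT (Lam lam g) w (psiinv lam g f - f) :=
  WLT_aeval_sub_self (hv_psiinv lam g hg0) hf

end Main2

end GAux

namespace GAux

section MainThm

variable {k : Type*} [Field k]

theorem mainThm (q m n : ℕ) (lam : Fin q → ℤ)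
    (g : Fin (m + n) → MvPolynomial (Fin q) k)
    (hg0 : ∀ i, g i ≠ 0)
    (I J : Ideal (MvPolynomial (Fin q) k))
    (hI : I = Ideal.span (Set.range fun i : Fin m => g (Fin.castAdd n i)))
    (hJ : J = Ideal.span (Set.range g))
    (hGBI : initialIdeal lam I =
      Ideal.span (Set.range fun i : Fin m => initialForm lam (g (Fin.castAdd n i))))
    (hGBJ : initialIdeal lam J =
      Ideal.span (Set.range fun i : Fin (m + n) => initialForm lam (g i))) :
    initialIdeal (Lam lam g)
      (Ideal.map (rename Sum.inl :
            MvPolynomial (Fin q) k →ₐ[k] MvPolynomial (Fin q ⊕ Fin (m + n)) k) I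
        + Ideal.span (Set.range fun i : Fin m =>
            (X (Sum.inr (Fin.castAdd n i)) : MvPolynomial (Fin q ⊕ Fin (m + n)) k))
        + syzygyIdeal g)
    =
    Ideal.map (rename Sum.inl :
          MvPolynomial (Fin q) k →ₐ[k] MvPolynomial (Fin q ⊕ Fin (m + n)) k)
        (initialIdeal lam I)
      + Ideal.span (Set.range fun i : Fin m =>
          (X (Sum.inr (Fin.castAdd n i)) : MvPolynomial (Fin q ⊕ Fin (m + n)) k))
      + syzygyIdeal (fun i => initialForm lam (g i)) := by
  classical
  set IT := Ideal.map (rename Sum.inl :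
      MvPolynomial (Fin q) k →ₐ[k] MvPolynomial (Fin q ⊕ Fin (m + n)) k) I with hITdef
  set EpsM := Ideal.span (Set.range fun i : Fin m =>
      (X (Sum.inr (Fin.castAdd n i)) : MvPolynomial (Fin q ⊕ Fin (m + n)) k)) with hEpsMdef
  set A := IT + EpsM + syzygyIdeal g with hAdef
  set B := Ideal.map (rename Sum.inl :
        MvPolynomial (Fin q) k →ₐ[k] MvPolynomial (Fin q ⊕ Fin (m + n)) k)
      (initialIdeal lam I) + EpsM + syzygyIdeal (fun i => initialForm lam (g i)) with hBdef
  -- basic structural facts about the syzygy ideals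
  have hSyzg_eps : syzygyIdeal g ≤ SpanEps := inf_le_left
  have hSyzin_eps : syzygyIdeal (fun i => initialForm lam (g i)) ≤ SpanEps := inf_le_left
  have hSyzg_ker : ∀ f ∈ syzygyIdeal g, evg g f = 0 := by
    intro f hf
    exact RingHom.mem_ker.1 ((Submodule.mem_inf.1 hf).2)
  have hSyzin_ker : ∀ f ∈ syzygyIdeal (fun i => initialForm lam (g i)),
      evg (fun l => initialForm lam (g l)) f = 0 := by
    intro f hf
    exact RingHom.mem_ker.1 ((Submodule.mem_inf.1 hf).2)
  -- `eta` maps A into I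
  have haveA_eta : ∀ f ∈ A, eta f ∈ I := by
    intro f hf
    have hle : A ≤ Ideal.comap (eta : MvPolynomial (Fin q ⊕ Fin (m + n)) k →ₐ[k]
        MvPolynomial (Fin q) k) I := by
      refine sup_le (sup_le ?_ ?_) ?_
      · rw [hITdef]
        refine Ideal.map_le_iff_le_comap.2 ?_
        intro u hu
        simp only [Ideal.mem_comap]
        rw [eta_rename]
        exact hu
      · rw [hEpsMdef, Ideal.span_le]
        rintro x ⟨i, rfl⟩
        simp only [SetLike.mem_coe, Ideal.mem_comap]
        rw [eta_X_inr]
        exact I.zero_mem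
      · intro x hx
        simp only [Ideal.mem_comap]
        rw [eta_eq_zero_of_mem_SpanEps (hSyzg_eps hx)]
        exact I.zero_mem
    exact hle hf
  -- `evg g` maps A into I
  have haveA_ev : ∀ f ∈ A, evg g f ∈ I := by
    intro f hf
    have hle : A ≤ Ideal.comap (evg g : MvPolynomial (Fin q ⊕ Fin (m + n)) k →ₐ[k]
        MvPolynomial (Fin q) k) I := by
      refine sup_le (sup_le ?_ ?_) ?_
      · rw [hITdef]
        refine Ideal.map_le_iff_le_comap.2 ?_
        intro u hu
        simp only [Ideal.mem_comap]
        rw [evg_rename]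
        exact hu
      · rw [hEpsMdef, Ideal.span_le]
        rintro x ⟨i, rfl⟩
        simp only [SetLike.mem_coe, Ideal.mem_comap]
        rw [evg_X_inr]
        rw [hI]
        exact Ideal.subset_span ⟨i, rfl⟩
      · intro x hx
        simp only [Ideal.mem_comap]
        rw [hSyzg_ker x hx]
        exact I.zero_mem
    exact hle hf
  -- converse characterization of B
  have hB_of : ∀ F : MvPolynomial (Fin q ⊕ Fin (m + n)) k,
      eta F ∈ initialIdeal lam I →
      evg (fun l => initialForm lam (g l)) F ∈ initialIdeal lam I → F ∈ B := by
    intro F h1 h2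
    have hF1 : rename Sum.inl (eta F) ∈ Ideal.map (rename Sum.inl :
        MvPolynomial (Fin q) k →ₐ[k] MvPolynomial (Fin q ⊕ Fin (m + n)) k)
        (initialIdeal lam I) := Ideal.mem_map_of_mem _ h1
    have hF'eps : F - rename Sum.inl (eta F) ∈ SpanEps := sub_rename_eta_mem F
    have hevF' : evg (fun l => initialForm lam (g l)) (F - rename Sum.inl (eta F))
        ∈ initialIdeal lam I := by
      rw [map_sub, evg_rename]
      exact Submodule.sub_mem _ h2 h1
    rw [hGBI] at hevF'
    obtain ⟨c, hc⟩ := (Submodule.mem_span_range_iff_exists_fun _).1 hevF'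
    set E := ∑ i : Fin m, rename Sum.inl (c i) * X (Sum.inr (Fin.castAdd n i)) with hE
    have hEmem : E ∈ EpsM := by
      rw [hEpsMdef]
      exact Submodule.sum_mem _ fun i _ =>
        Ideal.mul_mem_left _ _ (Ideal.subset_span ⟨i, rfl⟩)
    have hEeps : E ∈ SpanEps := by
      exact Submodule.sum_mem _ fun i _ =>
        Ideal.mul_mem_left _ _ (Ideal.subset_span ⟨Fin.castAdd n i, rfl⟩)
    have hevE : evg (fun l => initialForm lam (g l)) E
        = ∑ i : Fin m, c i * initialForm lam (g (Fin.castAdd n i)) := by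
      rw [hE, map_sum]
      exact Finset.sum_congr rfl fun i _ => by
        rw [map_mul, evg_rename, evg_X_inr]
    have hsyz : (F - rename Sum.inl (eta F)) - E
        ∈ syzygyIdeal (fun i => initialForm lam (g i)) := by
      refine Submodule.mem_inf.2 ⟨Submodule.sub_mem _ hF'eps hEeps, ?_⟩
      rw [RingHom.mem_ker]
      show evg (fun l => initialForm lam (g l)) ((F - rename Sum.inl (eta F)) - E) = 0
      rw [map_sub, hevE]
      rw [show (∑ i : Fin m, c i * initialForm lam (g (Fin.castAdd n i)))
          = evg (fun l => initialForm lam (g l)) (F - rename Sum.inl (eta F)) from by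
        rw [← hc]
        exact Finset.sum_congr rfl fun i _ => (smul_eq_mul (α := MvPolynomial (Fin q) k) _ _)]
      ring
    have hFsplit : F = rename Sum.inl (eta F) + E + ((F - rename Sum.inl (eta F)) - E) := by
      ring
    rw [hBdef, hFsplit]
    exact Submodule.add_mem _
      (Submodule.add_mem _ (Submodule.mem_sup_left (Submodule.mem_sup_left hF1))
        (Submodule.mem_sup_left (Submodule.mem_sup_right hEmem)))
      (Submodule.mem_sup_right hsyz)
  -- top component of elements of I lies in the initial ideal
  have hcompI : ∀ (P : MvPolynomial (Fin q) k) (w : ℤ), P ∈ I → WLE lam w P →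
      comp lam w P ∈ initialIdeal lam I := by
    intro P w hPI hPle
    by_cases hP0 : P = 0
    · rw [hP0, comp_zero]
      exact Submodule.zero_mem _
    by_cases hPw : maxWeight lam P = w
    · rw [← hPw, ← initialForm_eq_comp hP0]
      exact Ideal.subset_span ⟨P, hPI, hP0, rfl⟩
    · rw [comp_eq_zero_of_gt (WLE_maxWeight P)
        (lt_of_le_of_ne (maxWeight_le hP0 hPle) hPw)]
      exact Submodule.zero_mem _
  -- Main Lemma 1: initial forms of elements of A lie in B
  have hsubset : ∀ f, f ∈ A → f ≠ 0 → initialForm (Lam lam g) f ∈ B := by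
    intro f hfA hf0
    set w := maxWeight (Lam lam g) f with hwdef
    have hwle : WLE (Lam lam g) w f := WLE_maxWeight f
    have hin : initialForm (Lam lam g) f = comp (Lam lam g) w f := initialForm_eq_comp hf0
    apply hB_of
    · rw [hin, comp_eta]
      exact hcompI _ w (haveA_eta f hfA) (WLE.eta_map lam g hwle)
    · have hpert := psiinv_sub_self_WLT lam g hg0 hwle
      have hf'le : WLE (Lam lam g) w (psiinv lam g f) := by
        have heq : psiinv lam g f = f + (psiinv lam g f - f) := by ring
        rw [heq]
        exact hwle.add hpert.wle
      have hcompf' : comp (Lam lam g) w (psiinv lam g f) = comp (Lam lam g) w f := by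
        have h0 : comp (Lam lam g) w (psiinv lam g f - f) = 0 :=
          comp_eq_zero_of_gt (WLT_iff_WLE_sub_one.1 hpert) (by omega)
        have h1 := comp_sub (lam := Lam lam g) w (psiinv lam g f) f
        rw [h0] at h1
        exact sub_eq_zero.1 h1.symm
      rw [hin, ← hcompf', comp_evgin, evgin_psiinv]
      refine hcompI _ w (haveA_ev f hfA) ?_
      rw [← evgin_psiinv lam g f]
      exact WLE.evgin_map lam g hf'le
  -- Main Lemma 2: homogeneous elements of Syz(in g) are initial forms of elements of A
  have hsyz_le : ∀ (w : ℤ) (G : MvPolynomial (Fin q ⊕ Fin (m + n)) k),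
      WEQ (Lam lam g) w G → G ∈ syzygyIdeal (fun i => initialForm lam (g i)) →
      G ∈ initialIdeal (Lam lam g) A := by
    intro w G hGw hGmem
    by_cases hG0 : G = 0
    · rw [hG0]; exact Submodule.zero_mem _
    have hGeps : G ∈ SpanEps := hSyzin_eps hGmem
    have hGev : evg (fun l => initialForm lam (g l)) G = 0 := hSyzin_ker G hGmem
    have hpsiG : WLT (Lam lam g) w (psi lam g G - G) := psi_sub_self_WLT lam g hg0 hGw.wle
    set D := eta (psi lam g G) with hD
    have hDeq : D = eta (psi lam g G - G) := by
      rw [map_sub, eta_eq_zero_of_mem_SpanEps hGeps, sub_zero]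
    have hDwlt : WLT lam w D := by
      rw [hDeq]
      exact WLT_iff_WLE_sub_one.2 (WLE.eta_map lam g (WLT_iff_WLE_sub_one.1 hpsiG))
    have hDJ : D ∈ J := by
      have hhom : (Ideal.Quotient.mkₐ k J).comp
            ((eta : MvPolynomial (Fin q ⊕ Fin (m + n)) k →ₐ[k]
              MvPolynomial (Fin q) k).comp (psi lam g))
          = (Ideal.Quotient.mkₐ k J).comp (evg (fun l => initialForm lam (g l))) := by
        apply MvPolynomial.algHom_ext
        rintro (j | l)
        · rw [AlgHom.comp_apply, AlgHom.comp_apply, AlgHom.comp_apply, psi_X_inl,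
            eta_X_inl, evg_X_inl]
        · rw [AlgHom.comp_apply, AlgHom.comp_apply, AlgHom.comp_apply, psi_X_inr,
            map_sub, eta_X_inr, eta_rename, evg_X_inr]
          have hgl : (Ideal.Quotient.mkₐ k J) (g l) = 0 := by
            have hmem : g l ∈ J := by rw [hJ]; exact Ideal.subset_span ⟨l, rfl⟩
            rw [show ⇑(Ideal.Quotient.mkₐ k J) = ⇑(Ideal.Quotient.mk J) from
              Ideal.Quotient.mkₐ_eq_mk k J]
            exact Ideal.Quotient.eq_zero_iff_mem.2 hmem
          rw [show (0 : MvPolynomial (Fin q) k) - (g l - initialForm lam (g l))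
              = initialForm lam (g l) - g l from by ring, map_sub, hgl, sub_zero]
      have happ := DFunLike.congr_fun hhom G
      simp only [AlgHom.comp_apply] at happ
      rw [hGev, map_zero, ← hD] at happ
      rw [show ⇑(Ideal.Quotient.mkₐ k J) = ⇑(Ideal.Quotient.mk J) from
        Ideal.Quotient.mkₐ_eq_mk k J] at happ
      exact Ideal.Quotient.eq_zero_iff_mem.1 happ
    have hDle : WLE lam (w - 1) D := WLT_iff_WLE_sub_one.1 hDwlt
    have hDJ' : D ∈ Ideal.span (Set.range g) := by rw [← hJ]; exact hDJ
    obtain ⟨c, hc, hcle⟩ := Lstd hg0 (by rw [← hJ]; exact hGBJ) hDJ' hDle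
    set f := psi lam g G - rename Sum.inl D
        + ∑ l, rename Sum.inl (c l) * X (Sum.inr l) with hf
    have hfeta : eta f = 0 := by
      rw [hf, map_add, map_sub, eta_rename, map_sum, ← hD]
      rw [Finset.sum_congr rfl fun l (_ : l ∈ Finset.univ) => by
        rw [map_mul, eta_rename, eta_X_inr, mul_zero]]
      simp
    have hfev : evg g f = 0 := by
      rw [hf, map_add, map_sub, evg_rename, map_sum, evg_psi, hGev]
      rw [Finset.sum_congr rfl fun l (_ : l ∈ Finset.univ) => by
        rw [map_mul, evg_rename, evg_X_inr]]
      rw [← hc]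
      ring
    have hfSyz : f ∈ syzygyIdeal g :=
      Submodule.mem_inf.2 ⟨mem_SpanEps_of_eta_eq_zero hfeta, RingHom.mem_ker.2 hfev⟩
    have hfA : f ∈ A := Submodule.mem_sup_right hfSyz
    have hR : WLT (Lam lam g) w (f - G) := by
      have heq : f - G = ((psi lam g G - G) - rename Sum.inl D)
          + ∑ l, rename Sum.inl (c l) * X (Sum.inr l) := by
        rw [hf]; ring
      rw [heq]
      refine (hpsiG.sub ?_).add (WLT.sum fun l _ => ?_)
      · exact WLT.rename_inl lam g hDwlt
      · have h1 : WLE (Lam lam g) (w - 1 - maxWeight lam (g l))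
            (rename Sum.inl (c l) : MvPolynomial (Fin q ⊕ Fin (m + n)) k) :=
          WLE.rename_inl lam g (hcle l)
        have h2 : WEQ (Lam lam g) (maxWeight lam (g l))
            (X (Sum.inr l) : MvPolynomial (Fin q ⊕ Fin (m + n)) k) := WEQ_X (Sum.inr l)
        have h3 := h1.mul h2.wle
        rw [show w - 1 - maxWeight lam (g l) + maxWeight lam (g l) = w - 1 by ring] at h3
        exact WLT_iff_WLE_sub_one.2 h3
    have hfG := initialForm_add_of_WLT hG0 hGw hR
    rw [show G + (f - G) = f by ring] at hfG
    exact Ideal.subset_span ⟨f, hfA, hfG.2.1, hfG.1.symm⟩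
  -- final assembly
  apply le_antisymm
  · rw [initialIdeal, Ideal.span_le]
    rintro p ⟨f, hfA, hf0, rfl⟩
    exact hsubset f hfA hf0
  · rw [hBdef]
    refine sup_le (sup_le ?_ ?_) ?_
    · rw [initialIdeal, Ideal.map_span, Ideal.span_le]
      rintro p ⟨x, ⟨u, huI, hu0, rfl⟩, rfl⟩
      have hIF := initialForm_rename_inl lam g hu0
      refine Ideal.subset_span ⟨rename Sum.inl u, ?_, rename_inl_ne_zero hu0, hIF.1.symm⟩
      exact Submodule.mem_sup_left (Submodule.mem_sup_left (Ideal.mem_map_of_mem _ huI))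
    · rw [hEpsMdef, Ideal.span_le]
      rintro p ⟨i, rfl⟩
      have hXne : (X (Sum.inr (Fin.castAdd n i)) : MvPolynomial (Fin q ⊕ Fin (m + n)) k)
          ≠ 0 := MvPolynomial.X_ne_zero _
      have hXweq : WEQ (Lam lam g) (maxWeight lam (g (Fin.castAdd n i)))
          (X (Sum.inr (Fin.castAdd n i)) : MvPolynomial (Fin q ⊕ Fin (m + n)) k) :=
        WEQ_X _
      refine Ideal.subset_span ⟨X (Sum.inr (Fin.castAdd n i)), ?_, hXne,
        (hXweq.initialForm_self hXne).symm⟩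
      exact Submodule.mem_sup_left (Submodule.mem_sup_right
        (Ideal.subset_span ⟨i, rfl⟩))
    · intro h hh
      have hdec : h = ∑ w ∈ h.support.image (monWeight (Lam lam g)),
          comp (Lam lam g) w h :=
        (sum_comp fun d hd => Finset.mem_image_of_mem _ hd).symm
      rw [hdec]
      refine Submodule.sum_mem _ fun w _ => ?_
      have hcompmem : comp (Lam lam g) w h
          ∈ syzygyIdeal (fun i => initialForm lam (g i)) := by
        refine Submodule.mem_inf.2 ⟨?_, ?_⟩
        · apply mem_SpanEps_of_eta_eq_zero
          rw [comp_eta, eta_eq_zero_of_mem_SpanEps (hSyzin_eps hh), comp_zero]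
        · rw [RingHom.mem_ker]
          have := comp_evgin lam g w h
          rw [hSyzin_ker h hh, comp_zero] at this
          exact this
      exact hsyz_le w _ (comp_WEQ w h) hcompmem

end MainThm

end GAux


/-- Let `S = k[x_1,…,x_q]`, `λ` an integral weight function, and
`g_1,…,g_{m+n}` nonzero polynomials each having a unique term of maximal `λ`-weight.  Let
`I = (g_1,…,g_m) ⊆ J = (g_1,…,g_{m+n})`, and assume these generating sets are Gröbner bases
with respect to `λ`.  Define `λ̃` on `S[ε_1,…,ε_{m+n}]` by `λ̃(x_j) = λ(x_j)` and
`λ̃(ε_i) = λ(in_λ(g_i))`.  Then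
`in_{λ̃}(I·S[ε] + (ε_1,…,ε_m) + Syz({g_i})) = in_λ(I)·S[ε] + (ε_1,…,ε_m) + Syz({in_λ(g_i)})`:
the blow-up algebra of `S/I` along `J/I` Gröbner-degenerates via `λ̃` to the blow-up
algebra of `S/in_λ(I)` along `in_λ(J)/in_λ(I)`. -/
theorem initialIdeal_blowupPresentation
    {k : Type*} [Field k] (q m n : ℕ) (lam : Fin q → ℤ)
    (g : Fin (m + n) → MvPolynomial (Fin q) k)
    (hg0 : ∀ i, g i ≠ 0)
    (hg1 : ∀ i, ∃! d : Fin q →₀ ℕ, d ∈ (g i).support ∧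
      ∀ e ∈ (g i).support, monWeight lam e ≤ monWeight lam d)
    (I J : Ideal (MvPolynomial (Fin q) k))
    (hI : I = Ideal.span (Set.range fun i : Fin m => g (Fin.castAdd n i)))
    (hJ : J = Ideal.span (Set.range g))
    (hGBI : initialIdeal lam I =
      Ideal.span (Set.range fun i : Fin m => initialForm lam (g (Fin.castAdd n i))))
    (hGBJ : initialIdeal lam J =
      Ideal.span (Set.range fun i : Fin (m + n) => initialForm lam (g i))) :
    initialIdeal (Sum.elim lam fun i : Fin (m + n) => maxWeight lam (g i))
      (Ideal.map (rename Sum.inl :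
            MvPolynomial (Fin q) k →ₐ[k] MvPolynomial (Fin q ⊕ Fin (m + n)) k) I
        + Ideal.span (Set.range fun i : Fin m =>
            (X (Sum.inr (Fin.castAdd n i)) : MvPolynomial (Fin q ⊕ Fin (m + n)) k))
        + syzygyIdeal g)
    =
    Ideal.map (rename Sum.inl :
          MvPolynomial (Fin q) k →ₐ[k] MvPolynomial (Fin q ⊕ Fin (m + n)) k)
        (initialIdeal lam I)
      + Ideal.span (Set.range fun i : Fin m =>
          (X (Sum.inr (Fin.castAdd n i)) : MvPolynomial (Fin q ⊕ Fin (m + n)) k))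
      + syzygyIdeal (fun i => initialForm lam (g i)) := by
  exact GAux.mainThm q m n lam g hg0 I J hI hJ hGBI hGBJ

end
end

section
/- Let R be a Noetherian integral domain, let r ≥ 1, and for each k = 1,…,r let I_k = (g_{k,1},…,g_{k,n_k}) be an ideal of R given with a finite generating set. Let S = R[z_{k,i} : 1 ≤ k ≤ r, 1 ≤ i ≤ n_k] be the polynomial ring with one variable z_{k,i} for each generator g_{k,i}, and let ev : S → R be the R-algebra homomorphism with ev(z_{k,i}) = g_{k,i}. Set Ī_k = (z_{k,1},…,z_{k,n_k}) ⊆ S, set Syz(I_k) = Ī_k ∩ ker(ev), and set Syz(∏_{k=1}^r I_k) = P ∩ ker(ev), where P ⊆ S is the ideal generated by the n_1⋯n_r products z_{1,i_1}·z_{2,i_2}·⋯·z_{r,i_r} over all index tuples (i_1,…,i_r). Then Syz(∏_{k=1}^r I_k) = Σ_{∅ ≠ M ⊆ {1,…,r}} ( ∏_{k ∉ M} Ī_k ) · ( ⋂_{k ∈ M} Syz(I_k) ), an equality of ideals of S. -/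
open MvPolynomial

noncomputable section

/-- The polynomial ring `S = R[z_{k,i}]` with one variable for each generator `g_{k,i}`. -/
abbrev GenPolyRing (R : Type*) [CommRing R] {r : ℕ} (n : Fin r → ℕ) : Type _ :=
  MvPolynomial (Σ k : Fin r, Fin (n k)) R

/-- The ideal `Ī_k = (z_{k,1}, …, z_{k,n_k})` of `S`. -/
def Ibar (R : Type*) [CommRing R] {r : ℕ} (n : Fin r → ℕ) (k : Fin r) :
    Ideal (GenPolyRing R n) :=
  Ideal.span (Set.range fun i : Fin (n k) => (X ⟨k, i⟩ : GenPolyRing R n))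

/-- The evaluation map `ev : S → R` sending `z_{k,i}` to `g_{k,i}`. -/
def evMap {R : Type*} [CommRing R] {r : ℕ} {n : Fin r → ℕ}
    (g : (Σ k : Fin r, Fin (n k)) → R) : GenPolyRing R n →ₐ[R] R :=
  aeval g

/-- The syzygy ideal `Syz(I_k) = Ī_k ∩ ker ev`. -/
def syzOf {R : Type*} [CommRing R] {r : ℕ} {n : Fin r → ℕ}
    (g : (Σ k : Fin r, Fin (n k)) → R) (k : Fin r) : Ideal (GenPolyRing R n) :=
  Ibar R n k ⊓ RingHom.ker (evMap g)

/-- The syzygy ideal `Syz(∏_k I_k) = P ∩ ker ev` of the products `g_{1,i₁}⋯g_{r,i_r}`, where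
`P` is the ideal generated by the products `z_{1,i₁}⋯z_{r,i_r}`. -/
def syzProd {R : Type*} [CommRing R] {r : ℕ} {n : Fin r → ℕ}
    (g : (Σ k : Fin r, Fin (n k)) → R) : Ideal (GenPolyRing R n) :=
  Ideal.span (Set.range fun t : (k : Fin r) → Fin (n k) =>
      ∏ k : Fin r, (X ⟨k, t k⟩ : GenPolyRing R n))
    ⊓ RingHom.ker (evMap g)

section aux

variable {R : Type*} [CommRing R] {r : ℕ} {n : Fin r → ℕ}

lemma X_eq_mono (v : Σ k : Fin r, Fin (n k)) :
    (X v : GenPolyRing R n) = monomial (Finsupp.single v 1) 1 := by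
  rw [← X_pow_eq_monomial, pow_one]

lemma prod_X_eq_monomial (s : Finset (Fin r)) (t : (k : Fin r) → Fin (n k)) :
    (∏ k ∈ s, (X ⟨k, t k⟩ : GenPolyRing R n)) =
      monomial (∑ k ∈ s, Finsupp.single (⟨k, t k⟩ : Σ k, Fin (n k)) 1) 1 := by
  classical
  induction s using Finset.induction_on with
  | empty => simp [monomial_zero']
  | @insert a s ha ih =>
      rw [Finset.prod_insert ha, Finset.sum_insert ha, ih, X_eq_mono,
        monomial_mul, one_mul]

lemma exists_ne_zero_of_mem_Ibar (k : Fin r) {f : GenPolyRing R n} (hf : f ∈ Ibar R n k) :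
    ∀ d ∈ f.support, ∃ i : Fin (n k), d ⟨k, i⟩ ≠ 0 := by
  classical
  refine Submodule.span_induction ?_ ?_ ?_ ?_ hf
  · rintro x ⟨i, rfl⟩ d hd
    have hd' : d ∈ ((monomial (Finsupp.single (⟨k, i⟩ : Σ k, Fin (n k)) 1) 1 :
        GenPolyRing R n)).support := by
      rw [← X_eq_mono]; exact hd
    have := support_monomial_subset hd' 
    rw [Finset.mem_singleton] at this
    subst this
    exact ⟨i, by simp⟩
  · intro d hd
    simp at hd
  · intro x y hx hy ihx ihy d hd
    have : d ∈ x.support ∪ y.support := MvPolynomial.support_add hd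
    rcases Finset.mem_union.mp this with h | h
    exacts [ihx d h, ihy d h]
  · intro a x hx ihx d hd
    rw [smul_eq_mul] at hd
    have := MvPolynomial.support_mul a x hd
    rcases Finset.mem_add.mp this with ⟨u, hu, v, hv, rfl⟩
    obtain ⟨i, hi⟩ := ihx v hv
    exact ⟨i, by simp [Finsupp.add_apply]; omega⟩

lemma mem_prod_Ibar (M : Finset (Fin r)) :
    ∀ f : GenPolyRing R n,
      (∀ d ∈ f.support, ∀ k ∈ M, ∃ i : Fin (n k), d ⟨k, i⟩ ≠ 0) →
      f ∈ ∏ k ∈ M, Ibar R n k := by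
  classical
  induction M using Finset.induction_on with
  | empty => intro f _; simp [Ideal.one_eq_top]
  | @insert a s ha ih =>
      intro f hf
      rw [Finset.prod_insert ha]
      rw [← support_sum_monomial_coeff f]
      refine Ideal.sum_mem _ fun d hd => ?_
      obtain ⟨i, hi⟩ := hf d hd a (Finset.mem_insert_self a s)
      have hle : Finsupp.single (⟨a, i⟩ : Σ k, Fin (n k)) 1 ≤ d :=
        Finsupp.single_le_iff.mpr (Nat.one_le_iff_ne_zero.mpr hi)
      have key : (X (⟨a, i⟩ : Σ k, Fin (n k)) : GenPolyRing R n) *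
          monomial (d - Finsupp.single ⟨a, i⟩ 1) (coeff d f) = monomial d (coeff d f) := by
        rw [X_eq_mono, monomial_mul, one_mul, add_tsub_cancel_of_le hle]
      rw [← key]
      refine Ideal.mul_mem_mul (Ideal.subset_span ⟨i, rfl⟩) (ih _ ?_)
      intro d' hd' k hk
      have hd'eq : d' = d - Finsupp.single (⟨a, i⟩ : Σ k, Fin (n k)) 1 := by
        have := support_monomial_subset hd'
        rwa [Finset.mem_singleton] at this
      subst hd'eq
      obtain ⟨j, hj⟩ := hf d hd k (Finset.mem_insert_of_mem hk)
      refine ⟨j, ?_⟩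
      have hne : (⟨a, i⟩ : Σ k, Fin (n k)) ≠ ⟨k, j⟩ := by
        intro h
        exact ha (by cases h; exact hk)
      rw [Finsupp.tsub_apply, Finsupp.single_eq_of_ne' hne]
      simpa using hj

lemma mem_span_prodX {f : GenPolyRing R n}
    (h : ∀ d ∈ f.support, ∀ k : Fin r, ∃ i : Fin (n k), d ⟨k, i⟩ ≠ 0) :
    f ∈ Ideal.span (Set.range fun t : (k : Fin r) → Fin (n k) =>
      ∏ k : Fin r, (X ⟨k, t k⟩ : GenPolyRing R n)) := by
  classical
  rw [← support_sum_monomial_coeff f]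
  refine Ideal.sum_mem _ fun d hd => ?_
  set t : (k : Fin r) → Fin (n k) := fun k => (h d hd k).choose with ht
  have htspec : ∀ k : Fin r, d ⟨k, t k⟩ ≠ 0 := fun k => (h d hd k).choose_spec
  set e : (Σ k : Fin r, Fin (n k)) →₀ ℕ :=
    ∑ k : Fin r, Finsupp.single (⟨k, t k⟩ : Σ k, Fin (n k)) 1 with he
  have hle : e ≤ d := by
    rw [Finsupp.le_def]
    rintro ⟨k₀, j⟩
    have hev : e ⟨k₀, j⟩ = Finsupp.single (⟨k₀, t k₀⟩ : Σ k, Fin (n k)) 1 ⟨k₀, j⟩ := by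
      rw [he, Finsupp.finset_sum_apply]
      refine Finset.sum_eq_single k₀ (fun k _ hk => ?_) (fun h => absurd (Finset.mem_univ _) h)
      exact Finsupp.single_eq_of_ne' (fun hc => hk (congrArg Sigma.fst hc))
    rw [hev]
    by_cases hj : (⟨k₀, t k₀⟩ : Σ k, Fin (n k)) = ⟨k₀, j⟩
    · rw [hj, Finsupp.single_eq_same]
      have : d ⟨k₀, j⟩ ≠ 0 := hj ▸ htspec k₀
      omega
    · rw [Finsupp.single_eq_of_ne' hj]
      exact Nat.zero_le _
  have key : (∏ k : Fin r, (X ⟨k, t k⟩ : GenPolyRing R n)) * monomial (d - e) (coeff d f)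
      = monomial d (coeff d f) := by
    rw [prod_X_eq_monomial, ← he, monomial_mul, one_mul, add_tsub_cancel_of_le hle]
  rw [← key]
  exact Ideal.mul_mem_right _ _ (Ideal.subset_span ⟨t, rfl⟩)

end aux

/-- Let `R` be a Noetherian integral domain and `I_k = (g_{k,1},…,g_{k,n_k})`,
`k = 1,…,r`, ideals given with finite generating sets.  Then
`Syz(∏_k I_k) = Σ_{∅ ≠ M ⊆ {1,…,r}} (∏_{k ∉ M} Ī_k) · (⋂_{k ∈ M} Syz(I_k))`
as ideals of `S = R[z_{k,i}]`. -/
theorem syzProd_eq_sum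
    (R : Type*) [CommRing R] [IsDomain R] [IsNoetherianRing R]
    (r : ℕ) (hr : 1 ≤ r) (n : Fin r → ℕ)
    (g : (Σ k : Fin r, Fin (n k)) → R) :
    syzProd g =
      ⨆ (M : Finset (Fin r)) (_ : M.Nonempty),
        (∏ k ∈ Mᶜ, Ibar R n k) * ⨅ k ∈ M, syzOf g k := by
  classical
  have hspan_le_Ibar : ∀ k : Fin r,
      Ideal.span (Set.range fun t : (k : Fin r) → Fin (n k) =>
        ∏ k : Fin r, (X ⟨k, t k⟩ : GenPolyRing R n)) ≤ Ibar R n k := by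
    intro k
    rw [Ideal.span_le]
    rintro x ⟨t, rfl⟩
    show (∏ l : Fin r, (X ⟨l, t l⟩ : GenPolyRing R n)) ∈ Ibar R n k
    rw [← Finset.mul_prod_erase Finset.univ _ (Finset.mem_univ k)]
    exact Ideal.mul_mem_right _ _ (Ideal.subset_span ⟨t k, rfl⟩)
  apply le_antisymm
  · -- LHS ≤ term for M = univ
    have hne : (Finset.univ : Finset (Fin r)).Nonempty :=
      ⟨⟨0, hr⟩, Finset.mem_univ _⟩
    refine le_iSup₂_of_le Finset.univ hne ?_
    rw [Finset.compl_univ, Finset.prod_empty, one_mul]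
    refine le_iInf fun k => le_iInf fun _ => ?_
    rw [syzOf]
    exact le_inf (inf_le_left.trans (hspan_le_Ibar k)) inf_le_right
  · refine iSup₂_le fun M hM => ?_
    obtain ⟨k₀, hk₀⟩ := hM
    refine le_inf ?_ ?_
    · -- term ≤ span of products
      have h1 : (⨅ k ∈ M, syzOf g k) ≤ ∏ k ∈ M, Ibar R n k := by
        intro f hf
        refine mem_prod_Ibar M f fun d hd k hk => ?_
        have hfk : f ∈ syzOf g k := by
          have := (Submodule.mem_iInf _).mp hf k
          exact (Submodule.mem_iInf _).mp this hk
        exact exists_ne_zero_of_mem_Ibar k hfk.1 d hd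
      refine le_trans (Ideal.mul_mono_right h1) ?_
      rw [Finset.prod_compl_mul_prod]
      intro f hf
      refine mem_span_prodX fun d hd k => ?_
      have hfk : f ∈ Ibar R n k :=
        (Ideal.prod_le_inf.trans (Finset.inf_le (Finset.mem_univ k))) hf
      exact exists_ne_zero_of_mem_Ibar k hfk d hd
    · -- term ≤ ker ev
      refine Ideal.mul_le_right.trans ?_
      refine le_trans (iInf₂_le k₀ hk₀) ?_
      exact inf_le_right

end
end

section
/- Let (W,S) be a Coxeter system with length function ℓ and let π ∈ W. Let T_1 and T_2 be words in the simple reflections such that the concatenation T_1T_2 is a reduced word for π, and let s be a simple reflection. Then the Demazure product Dem(T_1 · s · T_2) of the word obtained by inserting s between T_1 and T_2 is either equal to π or covers π in the Bruhat order (in particular ℓ(Dem(T_1 · s · T_2)) ≤ ℓ(π) + 1). -/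
noncomputable section

variable {B W : Type*} [Group W] {M : CoxeterMatrix B}

/-- One step of the Demazure product: multiply by the simple reflection `s` if this
increases the length, and do nothing otherwise. -/
def demazureStep (cs : CoxeterSystem M W) (w : W) (s : B) : W :=
  if cs.length w < cs.length (w * cs.simple s) then w * cs.simple s else w

/-- The Demazure product of a word, defined recursively from `Dem(∅) = 1` by
`Dem(Q ++ [s]) = Dem(Q)·s` if `ℓ(Dem(Q)·s) > ℓ(Dem(Q))` and `Dem(Q ++ [s]) = Dem(Q)`
otherwise. -/
def demazureProd (cs : CoxeterSystem M W) (Q : List B) : W :=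
  Q.foldl (demazureStep cs) 1

/-- The Bruhat order: `u ≤ w` iff some reduced word for `w` contains a (not necessarily
contiguous) subword which is a reduced word for `u`. -/
def bruhatLE (cs : CoxeterSystem M W) (u w : W) : Prop :=
  ∃ ω : List B, cs.IsReduced ω ∧ cs.wordProd ω = w ∧
    ∃ ω' : List B, ω'.Sublist ω ∧ cs.IsReduced ω' ∧ cs.wordProd ω' = u

/-- `w` covers `u` in the Bruhat order: `u ≤ w`, `u ≠ w` and `ℓ(w) = ℓ(u) + 1`. -/
def bruhatCovers (cs : CoxeterSystem M W) (u w : W) : Prop :=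
  bruhatLE cs u w ∧ u ≠ w ∧ cs.length w = cs.length u + 1

section Aux

open List CoxeterSystem

set_option linter.unusedSectionVars false
set_option maxHeartbeats 1000000

variable (cs : CoxeterSystem M W)

namespace DemAux

local prefix:100 "π" => cs.wordProd

lemma conj_pow_self {x g : W} (hx : x * x = 1) (h : ℕ) :
    x * g ^ h * x = (x * g * x) ^ h := by
  have hxinv : x⁻¹ = x := inv_eq_of_mul_eq_one_right hx
  calc x * g ^ h * x = x * g ^ h * x⁻¹ := by rw [hxinv]
    _ = (x * g * x⁻¹) ^ h := conj_pow.symm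
    _ = (x * g * x) ^ h := by rw [hxinv]

lemma comm_even {a b : W} (ha : a * a = 1) (hb : b * b = 1) {h : ℕ}
    (hrel : (a * b) ^ (h + h) = 1) :
    a * (a * b) ^ h = (a * b) ^ h * a ∧ b * (a * b) ^ h = (a * b) ^ h * b := by
  set q := (a * b) ^ h with hq
  have habinv : (a * b)⁻¹ = b * a := by
    rw [mul_inv_rev, inv_eq_of_mul_eq_one_right ha, inv_eq_of_mul_eq_one_right hb]
  have hqq : q * q = 1 := by rw [hq, ← pow_add, hrel]
  have hqinv : q⁻¹ = q := inv_eq_of_mul_eq_one_right hqq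
  have hba : (b * a) ^ h = q := by rw [← habinv, inv_pow, hqinv]
  have key : ∀ x : W, x * x = 1 → x * (a * b) * x = b * a →
      x * q = q * x := by
    intro x hx hconj
    have h1 : x * q * x = q := by
      rw [hq, conj_pow_self hx, hconj, hba]
    calc x * q = x * q * (x * x) := by rw [hx, mul_one]
      _ = (x * q * x) * x := by rw [← mul_assoc]
      _ = q * x := by rw [h1]
  constructor
  · refine key a ha ?_
    rw [← mul_assoc, ha, one_mul]
  · refine key b hb ?_
    rw [← mul_assoc, mul_assoc (b*a), hb, mul_one]

lemma comm_odd {a b : W} (ha : a * a = 1) (hb : b * b = 1) {h : ℕ}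
    (hrel : (a * b) ^ (2 * h + 1) = 1) :
    a * (b * (a * b) ^ h) = (b * (a * b) ^ h) * b ∧
      b * (b * (a * b) ^ h) = (b * (a * b) ^ h) * a := by
  set P := (a * b) ^ h with hP
  have habinv : (a * b)⁻¹ = b * a := by
    rw [mul_inv_rev, inv_eq_of_mul_eq_one_right ha, inv_eq_of_mul_eq_one_right hb]
  have key : (a * b) ^ (h + 1) * P = 1 := by
    rw [hP, ← pow_add, show h + 1 + h = 2 * h + 1 by omega, hrel]
  have hPinv : P⁻¹ = (a * b) ^ (h + 1) := inv_eq_of_mul_eq_one_left key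
  have hbab : b * (a * b) * b = b * a := by
    rw [← mul_assoc, mul_assoc (b*a), hb, mul_one]
  have hba : (b * a) ^ h = P⁻¹ := by rw [← habinv, inv_pow]
  have hbPb : b * P * b = (a * b) ^ (h + 1) := by
    rw [hP, conj_pow_self hb, hbab, hba, hPinv]
  constructor
  · calc a * (b * P) = (a * b) * P := by rw [mul_assoc]
      _ = (a * b) ^ (h + 1) := by rw [hP, ← pow_succ']
      _ = (b * P) * b := by rw [← hbPb]
  · have haPa : a * P * a = (b * a) ^ h := by
      rw [hP, conj_pow_self ha]
      congr 1
      rw [← mul_assoc, ha, one_mul]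
    have hPa : P * a = a * (b * a) ^ h := by
      calc P * a = (a * a) * (P * a) := by rw [ha, one_mul]
        _ = a * (a * P * a) := by rw [mul_assoc, ← mul_assoc a P a]
        _ = a * (b * a) ^ h := by rw [haPa]
    have hbaP : (b * a) ^ (h + 1) = P := by
      rw [← habinv, inv_pow, ← hPinv, inv_inv]
    calc b * (b * P) = (b * b) * P := by rw [mul_assoc]
      _ = P := by rw [hb, one_mul]
      _ = (b * a) ^ (h + 1) := hbaP.symm
      _ = (b * a) * (b * a) ^ h := by rw [pow_succ']
      _ = b * (P * a) := by rw [hPa, ← mul_assoc]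
      _ = (b * P) * a := by rw [← mul_assoc]

/-- The commutation identity `s_{c(m+k)} * π(alt i j m) = π(alt i j m) * s_{c k}`. -/
lemma star (i j : B) (k : ℕ) :
    cs.simple (if Even (M i j + k) then j else i) * π (alternatingWord i j (M i j)) =
      π (alternatingWord i j (M i j)) * cs.simple (if Even k then j else i) := by
  have ha : cs.simple i * cs.simple i = 1 := cs.simple_mul_simple_self i
  have hb : cs.simple j * cs.simple j = 1 := cs.simple_mul_simple_self j
  have hrel : (cs.simple i * cs.simple j) ^ (M i j) = 1 := cs.simple_mul_simple_pow i j
  rw [cs.prod_alternatingWord_eq_mul_pow i j (M i j)]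
  rcases Nat.even_or_odd (M i j) with hm | hm
  · obtain ⟨h, hh⟩ := hm
    have hdiv : (M i j) / 2 = h := by omega
    have hEeq : (if Even (M i j + k) then j else i) = (if Even k then j else i) := by
      have heq : Even (M i j + k) ↔ Even k := by
        rw [Nat.even_add]
        exact ⟨fun hiff => hiff.mp ⟨h, hh⟩, fun hk => iff_of_true ⟨h, hh⟩ hk⟩
      by_cases hk : Even k <;> simp [heq, hk]
    rw [hEeq, if_pos (show Even (M i j) from ⟨h, hh⟩), one_mul, hdiv]
    obtain ⟨ca, cb⟩ := comm_even ha hb (hh ▸ hrel)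
    by_cases hk : Even k
    · rw [if_pos hk]; exact cb
    · rw [if_neg hk]; exact ca
  · obtain ⟨h, hh⟩ := hm
    have hdiv : (M i j) / 2 = h := by omega
    have hodd : ¬ Even (M i j) := by rw [hh]; simp [parity_simps]
    have hEneq : Even (M i j + k) ↔ ¬ Even k := by
      rw [Nat.even_add]
      constructor
      · intro hiff hk; exact hodd (hiff.mpr hk)
      · intro hk
        exact ⟨fun hmm => absurd hmm hodd, fun hkk => absurd hkk hk⟩
    rw [if_neg hodd, hdiv]
    obtain ⟨ca, cb⟩ := comm_odd ha hb (hh ▸ hrel)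
    by_cases hk : Even k
    · rw [if_neg (fun hc => (hEneq.mp hc) hk), if_pos hk]
      exact ca
    · rw [if_pos (hEneq.mpr hk), if_neg hk]
      exact cb

lemma q_succ (i j : B) (k : ℕ) :
    π (alternatingWord i j (k + 1)) =
      cs.simple (if Even k then j else i) * π (alternatingWord i j k) := by
  rw [alternatingWord_succ', wordProd_cons]

lemma q_add (i j : B) (k : ℕ) :
    π (alternatingWord i j (M i j + k)) =
      π (alternatingWord i j (M i j)) * π (alternatingWord i j k) := by
  induction k with
  | zero => simp [alternatingWord]
  | succ k ih =>
    rw [show M i j + (k + 1) = (M i j + k) + 1 from rfl, q_succ, ih, q_succ, ← mul_assoc,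
      ← mul_assoc, star]

open Classical in
def ind (w : W) (l : List W) : ZMod 2 :=
  (l.map (fun r => if r = w then (1 : ZMod 2) else 0)).sum

@[simp] lemma ind_nil (w : W) : ind w ([] : List W) = 0 := rfl

open Classical in
lemma ind_cons (w r : W) (l : List W) :
    ind w (r :: l) = (if r = w then 1 else 0) + ind w l := by
  simp [ind]

lemma ind_append (w : W) (l₁ l₂ : List W) :
    ind w (l₁ ++ l₂) = ind w l₁ + ind w l₂ := by
  simp [ind]

lemma ind_reverse (w : W) (l : List W) : ind w l.reverse = ind w l := by
  simp [ind, List.map_reverse, List.sum_reverse]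

open Classical in
lemma ind_map (g : W → W) (w w' : W) (h : ∀ r, g r = w ↔ r = w') (l : List W) :
    ind w (l.map g) = ind w' l := by
  simp only [ind, List.map_map]
  congr 1
  apply List.map_congr_left
  intro r _
  simp only [Function.comp_apply]
  by_cases hr : r = w'
  · rw [if_pos ((h r).mpr hr), if_pos hr]
  · rw [if_neg (fun hc => hr ((h r).mp hc)), if_neg hr]

open Classical in
lemma ind_eq_ite_of_nodup (w : W) {l : List W} (h : l.Nodup) :
    ind w l = if w ∈ l then 1 else 0 := by
  induction l with
  | nil => simp
  | cons r l ih =>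
    rw [ind_cons, ih (List.nodup_cons.mp h).2]
    rcases List.nodup_cons.mp h with ⟨hrl, _⟩
    by_cases hrw : r = w
    · subst hrw
      rw [if_pos rfl, if_neg hrl, if_pos List.mem_cons_self]
      simp
    · rw [if_neg hrw]
      by_cases hwl : w ∈ l
      · rw [if_pos hwl, if_pos (List.mem_cons_of_mem r hwl)]
        simp
      · rw [if_neg hwl, if_neg (by simp [hwl]; exact fun h => hrw h.symm)]
        simp

lemma ris_cons (i : B) (ω : List B) :
    cs.rightInvSeq (i :: ω) = ((π ω)⁻¹ * cs.simple i * π ω) :: cs.rightInvSeq ω := rfl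

lemma ris_alt (i j : B) (n : ℕ) :
    cs.rightInvSeq (alternatingWord i j n) =
      ((List.range n).reverse).map
        (fun k => (π (alternatingWord i j k))⁻¹ * π (alternatingWord i j (k + 1))) := by
  induction n with
  | zero => simp [alternatingWord]
  | succ n ih =>
    rw [alternatingWord_succ', ris_cons, ih, List.range_succ, List.reverse_append]
    simp only [List.reverse_cons, List.reverse_nil, List.nil_append, List.cons_append,
      List.map_cons]
    congr 1
    rw [q_succ, ← mul_assoc]

lemma ind_ris_alt (i j : B) (w : W) :
    ind w (cs.rightInvSeq (alternatingWord i j (2 * M i j))) = 0 := by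
  rw [ris_alt, List.map_reverse, ind_reverse, two_mul, List.range_add, List.map_append,
    ind_append, List.map_map]
  have hcongr : List.map ((fun k => (π (alternatingWord i j k))⁻¹ *
        π (alternatingWord i j (k + 1))) ∘ (fun x => M i j + x)) (List.range (M i j)) =
      List.map (fun k => (π (alternatingWord i j k))⁻¹ * π (alternatingWord i j (k + 1)))
        (List.range (M i j)) := by
    apply List.map_congr_left
    intro k _
    simp only [Function.comp_apply]
    rw [show M i j + k + 1 = M i j + (k + 1) from rfl, q_add, q_add, mul_inv_rev]
    group
  rw [hcongr, CharTwo.add_self_eq_zero]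

/-! ### The permutation representation on `W × ZMod 2` -/

open Classical in
def etaFun (i : B) : W × ZMod 2 → W × ZMod 2 :=
  fun p => (cs.simple i * p.1 * cs.simple i,
    if p.1 = cs.simple i then p.2 + 1 else p.2)

open Classical in
lemma etaFun_involutive (i : B) : Function.Involutive (etaFun cs i) := by
  rintro ⟨w, e⟩
  simp only [etaFun]
  have h1 : cs.simple i * (cs.simple i * w * cs.simple i) * cs.simple i = w := by
    rw [← mul_assoc, ← mul_assoc, cs.simple_mul_simple_self, one_mul, mul_assoc,
      cs.simple_mul_simple_self, mul_one]
  have h2 : (cs.simple i * w * cs.simple i = cs.simple i) ↔ w = cs.simple i := by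
    constructor
    · intro h
      have := congrArg (fun z => cs.simple i * z * cs.simple i) h
      rw [h1] at this
      rw [this, cs.simple_mul_simple_self, one_mul]
    · intro h
      rw [h, cs.simple_mul_simple_self, one_mul]
  refine Prod.ext h1 ?_
  simp only
  by_cases hw : w = cs.simple i
  · rw [if_pos hw, if_pos (h2.mpr hw)]
    have : (1 : ZMod 2) + 1 = 0 := by decide
    rw [add_assoc, this, add_zero]
  · rw [if_neg hw, if_neg (fun hc => hw (h2.mp hc))]

def etaPerm (i : B) : Equiv.Perm (W × ZMod 2) :=
  Function.Involutive.toPerm _ (etaFun_involutive cs i)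

lemma etaPerm_apply (i : B) (p : W × ZMod 2) : etaPerm cs i p = etaFun cs i p := rfl

open Classical in
lemma prod_etaPerm_apply (ω : List B) (p : W × ZMod 2) :
    (ω.map (etaPerm cs)).prod p =
      (π ω * p.1 * (π ω)⁻¹, p.2 + ind p.1 (cs.rightInvSeq ω)) := by
  induction ω with
  | nil => simp [ind]
  | cons i ω ih =>
    rw [List.map_cons, List.prod_cons, Equiv.Perm.mul_apply, ih, etaPerm_apply]
    simp only [etaFun]
    have hcond : (π ω * p.1 * (π ω)⁻¹ = cs.simple i) ↔
        ((π ω)⁻¹ * cs.simple i * π ω = p.1) := by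
      constructor
      · intro h; rw [← h]; group
      · intro h; rw [← h]; group
    refine Prod.ext ?_ ?_
    · simp only [wordProd_cons, mul_inv_rev, inv_simple]
      group
    · simp only [ris_cons, ind_cons]
      by_cases hc : (π ω)⁻¹ * cs.simple i * π ω = p.1
      · rw [if_pos (hcond.mpr hc), if_pos hc]
        ring
      · rw [if_neg (fun hcc => hc (hcond.mp hcc)), if_neg hc]
        ring

lemma etaLiftable : M.IsLiftable (fun i => etaPerm cs i) := by
  intro i j
  have hpow : ∀ n : ℕ, (etaPerm cs i * etaPerm cs j) ^ n =
      (List.map (etaPerm cs) (alternatingWord i j (2 * n))).prod := by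
    intro n
    induction n with
    | zero => simp [alternatingWord]
    | succ n ih =>
      have e1 : ¬ Even (2 * n + 1) := by simp [parity_simps]
      have e2 : Even (2 * n) := ⟨n, two_mul n⟩
      rw [show 2 * (n + 1) = (2 * n + 1) + 1 by ring, alternatingWord_succ',
        alternatingWord_succ', if_neg e1, if_pos e2, List.map_cons, List.map_cons,
        List.prod_cons, List.prod_cons, pow_succ', ih, mul_assoc]
  rw [hpow (M i j)]
  apply Equiv.ext
  intro p
  rw [prod_etaPerm_apply]
  have hπ : π (alternatingWord i j (2 * M i j)) = 1 := by
    rw [cs.prod_alternatingWord_eq_mul_pow, if_pos ⟨M i j, two_mul (M i j)⟩, one_mul,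
      show 2 * M i j / 2 = M i j from Nat.mul_div_cancel_left _ (by norm_num),
      cs.simple_mul_simple_pow]
  rw [hπ, ind_ris_alt]
  simp

def mu : W →* Equiv.Perm (W × ZMod 2) := cs.lift ⟨fun i => etaPerm cs i, etaLiftable cs⟩

lemma mu_wordProd (ω : List B) : mu cs (π ω) = (ω.map (etaPerm cs)).prod := by
  unfold CoxeterSystem.wordProd
  rw [map_list_prod, List.map_map]
  congr 1
  apply List.map_congr_left
  intro x _
  simp only [Function.comp_apply]
  exact cs.lift_apply_simple (etaLiftable cs) x

lemma ind_ris_congr {ω ω' : List B} (h : π ω = π ω') (w : W) :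
    ind w (cs.rightInvSeq ω) = ind w (cs.rightInvSeq ω') := by
  have h2 : mu cs (π ω) (w, (0 : ZMod 2)) = mu cs (π ω') (w, (0 : ZMod 2)) := by rw [h]
  rw [mu_wordProd, mu_wordProd, prod_etaPerm_apply, prod_etaPerm_apply] at h2
  have := congrArg Prod.snd h2
  simpa using this

local prefix:100 "ℓ" => cs.length

lemma ris_append (X Y : List B) :
    cs.rightInvSeq (X ++ Y) =
      (cs.rightInvSeq X).map (fun r => (π Y)⁻¹ * r * π Y) ++ cs.rightInvSeq Y := by
  induction X with
  | nil => simp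
  | cons x X ih =>
    rw [List.cons_append, ris_cons, ris_cons, ih, List.map_cons, List.cons_append]
    congr 1
    rw [wordProd_append, mul_inv_rev]
    group

lemma lis_eq_map (ω : List B) :
    cs.leftInvSeq ω = (cs.rightInvSeq ω).map (fun r => π ω * r * (π ω)⁻¹) := by
  induction ω with
  | nil => simp
  | cons x ω ih =>
    rw [ris_cons, List.map_cons]
    show CoxeterSystem.leftInvSeq cs (x :: ω) = _
    rw [CoxeterSystem.leftInvSeq]
    congr 1
    · rw [wordProd_cons, mul_inv_rev, inv_simple]
      group
      simp [cs.simple_sq]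
    · rw [ih, List.map_map]
      apply List.map_congr_left
      intro r _
      simp only [Function.comp_apply, MulAut.conj_apply, wordProd_cons, mul_inv_rev, inv_simple]
      group

lemma exists_refl_word {t : W} (ht : cs.IsReflection t) :
    ∃ τ : List B, π τ = t ∧ ind t (cs.rightInvSeq τ) = 1 := by
  obtain ⟨v, k, htv⟩ := ht
  obtain ⟨ρ, hρ⟩ := cs.wordProd_surjective v⁻¹
  refine ⟨ρ.reverse ++ k :: ρ, ?_, ?_⟩
  · rw [wordProd_append, wordProd_reverse, wordProd_cons, hρ, htv]
    group
  · have hπτ : π (k :: ρ) = cs.simple k * v⁻¹ := by rw [wordProd_cons, hρ]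
    have hhead : (π ρ)⁻¹ * cs.simple k * π ρ = t := by rw [hρ, htv]; group
    rw [ris_append, ind_append, ris_cons, ind_cons, hhead, if_pos rfl]
    have hmapped : ind t ((cs.rightInvSeq ρ.reverse).map
        (fun r => (π (k :: ρ))⁻¹ * r * π (k :: ρ))) = ind (cs.simple k)
        (cs.rightInvSeq ρ.reverse) := by
      apply ind_map
      intro r
      constructor
      · intro h
        have hr : r = π (k :: ρ) * t * (π (k :: ρ))⁻¹ := by rw [← h]; group
        rw [hr, hπτ, htv]
        group
      · intro h
        rw [h, hπτ, htv]
        group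
    rw [hmapped, rightInvSeq_reverse, ind_reverse, lis_eq_map]
    have : ind (cs.simple k) ((cs.rightInvSeq ρ).map (fun r => π ρ * r * (π ρ)⁻¹)) =
        ind t (cs.rightInvSeq ρ) := by
      apply ind_map
      intro r
      constructor
      · intro h
        have hr : r = (π ρ)⁻¹ * cs.simple k * π ρ := by rw [← h]; group
        rw [hr, hρ, htv]
        group
      · intro h
        rw [h, hρ, htv]
        group
    rw [this]
    have hz : ∀ x : ZMod 2, x + (1 + x) = 1 := by decide
    exact hz _

lemma ind_eq_one_of_inversion {ω : List B} {t : W} (ht : cs.IsReflection t)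
    (h : ℓ (π ω * t) < ℓ (π ω)) :
    ind t (cs.rightInvSeq ω) = 1 := by
  obtain ⟨σ, hσred, hσπ⟩ := cs.exists_reduced_word' (π ω * t)
  obtain ⟨τ, hτπ, hτind⟩ := exists_refl_word cs ht
  have hπeq : π ω = π (σ ++ τ) := by
    rw [wordProd_append, ← hσπ, hτπ, mul_assoc, ht.mul_self, mul_one]
  rw [ind_ris_congr cs hπeq, ris_append, ind_append]
  have hmap : ind t ((cs.rightInvSeq σ).map (fun r => (π τ)⁻¹ * r * π τ)) =
      ind t (cs.rightInvSeq σ) := by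
    apply ind_map
    intro r
    constructor
    · intro hc
      have hr : r = π τ * t * (π τ)⁻¹ := by rw [← hc]; group
      rw [hr, hτπ]
      have h1 : t * t * t⁻¹ = t := by rw [ht.mul_self, one_mul, ht.inv]
      exact h1
    · intro hc
      rw [hc, hτπ]
      have h1 : t⁻¹ * t * t = t := by rw [inv_mul_cancel, one_mul]
      exact h1
  rw [hmap, hτind]
  have hσ0 : ind t (cs.rightInvSeq σ) = 0 := by
    rw [ind_eq_ite_of_nodup t hσred.nodup_rightInvSeq]
    rw [if_neg]
    intro hmem
    have hinv := cs.isRightInversion_of_mem_rightInvSeq hσred hmem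
    rw [← hσπ] at hinv
    have h2 : ℓ (π ω * t * t) < ℓ (π ω * t) := hinv.2
    rw [mul_assoc, ht.mul_self, mul_one] at h2
    omega
  rw [hσ0, zero_add]

lemma strong_exchange {ω : List B} (hred : cs.IsReduced ω) {t : W}
    (ht : cs.IsReflection t) (h : ℓ (π ω * t) < ℓ (π ω)) :
    ∃ j < ω.length, π ω * t = π (ω.eraseIdx j) := by
  have hmem : t ∈ cs.rightInvSeq ω := by
    by_contra hmem
    have := ind_eq_one_of_inversion cs ht h
    rw [ind_eq_ite_of_nodup t hred.nodup_rightInvSeq, if_neg hmem] at this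
    exact absurd this (by decide)
  obtain ⟨j, hj, hget⟩ := List.mem_iff_getElem.mp hmem
  rw [cs.length_rightInvSeq] at hj
  refine ⟨j, hj, ?_⟩
  have hgetD : (cs.rightInvSeq ω).getD j 1 = t := by
    rw [List.getD_eq_getElem?_getD, List.getElem?_eq_getElem (by rwa [cs.length_rightInvSeq])]
    simpa using hget
  rw [← hgetD]
  exact cs.wordProd_mul_getD_rightInvSeq ω j

lemma isReduced_append_left {X Y : List B} (h : cs.IsReduced (X ++ Y)) :
    cs.IsReduced X := by
  have := h.take X.length
  rwa [List.take_left] at this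

/-- The deletion property. -/
lemma deletion : ∀ n (τ : List B), τ.length = n →
    ∃ σ, σ.Sublist τ ∧ cs.IsReduced σ ∧ π σ = π τ := by
  intro n
  induction n using Nat.strong_induction_on with
  | _ n ih =>
    intro τ hlen
    by_cases hred : cs.IsReduced τ
    · exact ⟨τ, List.Sublist.refl τ, hred, rfl⟩
    have hτne : τ ≠ [] := by
      rintro rfl
      exact hred (by simp [CoxeterSystem.IsReduced])
    have hτpos : 0 < τ.length := List.length_pos_iff.mpr hτne
    have hex : ∃ k, ¬ cs.IsReduced (τ.take (k + 1)) := by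
      refine ⟨τ.length - 1, ?_⟩
      rwa [show τ.length - 1 + 1 = τ.length by omega, List.take_length]
    classical
    set k₀ := Nat.find hex with hk₀def
    have hk₀ : ¬ cs.IsReduced (τ.take (k₀ + 1)) := Nat.find_spec hex
    have hmin : ∀ m, m < k₀ → cs.IsReduced (τ.take (m + 1)) := by
      intro m hm
      by_contra hc
      have hle : Nat.find hex ≤ m := Nat.find_le hc
      omega
    have hXred : cs.IsReduced (τ.take k₀) := by
      rcases Nat.eq_zero_or_pos k₀ with h0 | hpos
      · rw [h0]; simp [CoxeterSystem.IsReduced]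
      · have := hmin (k₀ - 1) (by omega)
        rwa [show k₀ - 1 + 1 = k₀ by omega] at this
    have hk₀lt : k₀ < τ.length := by
      by_contra hc
      push_neg at hc
      rw [List.take_of_length_le hc] at hXred
      exact hred hXred
    set X := τ.take k₀ with hXdef
    set x := τ[k₀] with hxdef
    have htake : τ.take (k₀ + 1) = X ++ [x] := by
      rw [hXdef, ← List.take_concat_get (l := τ) (i := k₀) hk₀lt, List.concat_eq_append]
    have hXlen : X.length = k₀ := by
      rw [hXdef, List.length_take]
      omega
    have hlX : ℓ (π X) = k₀ := by rw [← hXlen]; exact hXred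
    have hlXx : ℓ (π X * cs.simple x) < ℓ (π X) := by
      have hne : ℓ (π (X ++ [x])) ≠ k₀ + 1 := by
        intro hc
        apply hk₀
        rw [htake, CoxeterSystem.IsReduced, hc, List.length_append, hXlen]
        simp
      rw [wordProd_append, wordProd_singleton] at hne
      rcases cs.length_mul_simple (π X) x with hcase | hcase
      · rw [hlX] at hcase; exact absurd hcase hne
      · omega
    obtain ⟨j, hj, hexch⟩ := strong_exchange cs hXred (cs.isReflection_simple x) hlXx
    set τ' := X.eraseIdx j ++ τ.drop (k₀ + 1) with hτ'def
    have hsplit : π τ = π X * cs.simple x * π (τ.drop (k₀ + 1)) := by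
      conv_lhs => rw [← List.take_append_drop (k₀ + 1) τ]
      rw [wordProd_append, htake, wordProd_append, wordProd_singleton]
    have hπτ' : π τ' = π τ := by
      rw [hτ'def, wordProd_append, ← hexch, hsplit]
    have hsub : τ'.Sublist τ := by
      have h1 : X.eraseIdx j <+ X ++ [x] := (List.eraseIdx_sublist X j).trans
        (List.sublist_append_left X [x])
      have h2 : τ' <+ (X ++ [x]) ++ τ.drop (k₀ + 1) :=
        List.Sublist.append h1 (List.Sublist.refl _)
      rwa [← htake, List.take_append_drop] at h2
    have hlen' : τ'.length < n := by
      have hjX : j < X.length := by omega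
      have : τ'.length = (X.eraseIdx j).length + (τ.drop (k₀ + 1)).length := by
        rw [hτ'def, List.length_append]
      rw [List.length_eraseIdx_of_lt hjX, List.length_drop] at this
      omega
    obtain ⟨σ, hσsub, hσred, hσπ⟩ := ih τ'.length hlen' τ' rfl
    exact ⟨σ, hσsub.trans hsub, hσred, hσπ.trans hπτ'⟩

/-- One step up in Bruhat order via a reflection. -/
def covR (u w : W) : Prop :=
  ∃ t, cs.IsReflection t ∧ w = u * t ∧ ℓ u < ℓ w

/-- Subword property along chains. -/
lemma subword_of_chain {u w : W} (h : Relation.ReflTransGen (covR cs) u w) :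
    ∀ ω, cs.IsReduced ω → π ω = w →
      ∃ σ, σ.Sublist ω ∧ cs.IsReduced σ ∧ π σ = u := by
  induction h with
  | refl => exact fun ω hr hp => ⟨ω, List.Sublist.refl ω, hr, hp⟩
  | @tail v w' hav hcov ihv =>
    intro ω hred hπ
    obtain ⟨t, ht, hw, hlt⟩ := hcov
    have hv : v = π ω * t := by
      rw [hπ, hw, mul_assoc, ht.mul_self, mul_one]
    have hlen : ℓ (π ω * t) < ℓ (π ω) := by
      rw [← hv, hπ]
      exact hw ▸ hlt
    obtain ⟨j, hj, hexch⟩ := strong_exchange cs hred ht hlen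
    obtain ⟨τ, hτsub, hτred, hτπ⟩ := deletion cs (ω.eraseIdx j).length (ω.eraseIdx j) rfl
    obtain ⟨σ, hσsub, hσred, hσπ⟩ := ihv τ hτred (by rw [hτπ, ← hexch, ← hv])
    exact ⟨σ, hσsub.trans (hτsub.trans (List.eraseIdx_sublist ω j)), hσred, hσπ⟩

/-- The lifting lemma in the cover case. -/
lemma lift_lemma {u d : W} {t : B} (hcov : covR cs u d) (hlen : ℓ d = ℓ u + 1)
    (hd : ℓ (d * cs.simple t) < ℓ d) (hu : ℓ u < ℓ (u * cs.simple t)) :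
    d = u * cs.simple t := by
  obtain ⟨ω₀, hω₀red, hω₀π⟩ := cs.exists_reduced_word' (d * cs.simple t)
  have hω₀len : ω₀.length = ℓ (d * cs.simple t) := by rw [← hω₀red, ← hω₀π]
  have hddrop : ℓ (d * cs.simple t) + 1 = ℓ d := by
    rcases cs.length_mul_simple d t with hcase | hcase
    · omega
    · omega
  have hωπ : π (ω₀ ++ [t]) = d := by
    rw [wordProd_append, wordProd_singleton, ← hω₀π, mul_assoc,
      cs.simple_mul_simple_self, mul_one]
  have hωred : cs.IsReduced (ω₀ ++ [t]) := by
    rw [CoxeterSystem.IsReduced, hωπ, List.length_append]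
    simp only [List.length_singleton]
    omega
  obtain ⟨σ, hσsub, hσred, hσπ⟩ := subword_of_chain cs
    (Relation.ReflTransGen.single hcov) (ω₀ ++ [t]) hωred hωπ
  have hσlen : σ.length = ℓ u := by rw [← hσred, hσπ]
  obtain ⟨l₁, l₂, hσeq, hl₁, hl₂⟩ := List.sublist_append_iff.mp hσsub
  rcases List.sublist_singleton.mp hl₂ with h2 | h2
  · -- σ is a sublist of ω₀ of full length, so σ = ω₀
    have hσeq' : σ = l₁ := by rw [hσeq, h2, List.append_nil]
    have hll : l₁.length = σ.length := by rw [hσeq']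
    have hσω : σ = ω₀ := by
      rw [hσeq']
      exact hl₁.eq_of_length (by omega)
    rw [← hσπ, hσω, ← hω₀π, mul_assoc, cs.simple_mul_simple_self, mul_one]
  · -- σ ends in t, contradiction
    exfalso
    have hσeq' : σ = l₁ ++ [t] := by rw [hσeq, h2]
    have hust : u * cs.simple t = π l₁ := by
      rw [← hσπ, hσeq', wordProd_append, wordProd_singleton, mul_assoc,
        cs.simple_mul_simple_self, mul_one]
    have hle : ℓ (u * cs.simple t) ≤ l₁.length := by
      rw [hust]; exact cs.length_wordProd_le l₁
    have hlen1 : σ.length = l₁.length + 1 := by rw [hσeq']; simp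
    omega

lemma sublist_len_succ {α : Type*} :
    ∀ {Z U : List α}, U.Sublist Z → Z.length = U.length + 1 →
      ∃ K x L, Z = K ++ x :: L ∧ U = K ++ L := by
  intro Z U h
  induction h with
  | slnil => intro h; simp at h
  | @cons U' Z' a hsub ihsub =>
    intro hl
    simp only [List.length_cons] at hl
    have hUZ : U' = Z' := hsub.eq_of_length (by omega)
    exact ⟨[], a, Z', rfl, by rw [hUZ, List.nil_append]⟩
  | @cons_cons U' Z' a hsub ihsub =>
    intro hl
    simp only [List.length_cons] at hl
    obtain ⟨K, x, L, h1, h2⟩ := ihsub (by omega)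
    exact ⟨a :: K, x, L, by rw [h1, List.cons_append], by rw [h2, List.cons_append]⟩


lemma covR_of_data {Z U₀ : List B} {d u : W} (hZd : π Z = d) (hU₀u : π U₀ = u)
    (hsub : U₀.Sublist Z) (hlen : Z.length = U₀.length + 1) (hld : ℓ u < ℓ d) :
    covR cs u d := by
  obtain ⟨K, x, L, hZe, hUe⟩ := sublist_len_succ hsub hlen
  refine ⟨(π L)⁻¹ * cs.simple x * π L, ⟨(π L)⁻¹, x, by rw [inv_inv]⟩, ?_, hld⟩
  rw [← hZd, ← hU₀u, hZe, hUe, wordProd_append, wordProd_append, wordProd_cons]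
  group

lemma foldl_of_reduced : ∀ (Y X : List B), cs.IsReduced (X ++ Y) →
    List.foldl (demazureStep cs) (π X) Y = π (X ++ Y) := by
  intro Y
  induction Y with
  | nil => intro X h; simp
  | cons t Y ih =>
    intro X h
    have hassoc : X ++ t :: Y = (X ++ [t]) ++ Y := by simp
    have h' : cs.IsReduced ((X ++ [t]) ++ Y) := by rwa [← hassoc]
    have hXt : cs.IsReduced (X ++ [t]) := isReduced_append_left cs h'
    have hX : cs.IsReduced X := isReduced_append_left cs h
    have hlt : ℓ (π X) < ℓ (π X * cs.simple t) := by
      have h1 : ℓ (π X) = X.length := hX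
      have h2 : ℓ (π (X ++ [t])) = (X ++ [t]).length := hXt
      rw [wordProd_append, wordProd_singleton, List.length_append,
        List.length_singleton] at h2
      omega
    have hstep : demazureStep cs (π X) t = π (X ++ [t]) := by
      unfold demazureStep
      rw [if_pos hlt, wordProd_append, wordProd_singleton]
    rw [List.foldl_cons, hstep, ih (X ++ [t]) h', hassoc]

lemma main_fold : ∀ (R : List B) (u d : W),
    (∃ U : List B, π U = u ∧ cs.IsReduced (U ++ R)) →
    (d = u ∨ ∃ Z U₀ : List B, cs.IsReduced Z ∧ π Z = d ∧ U₀.Sublist Z ∧ π U₀ = u ∧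
      Z.length = U₀.length + 1 ∧ ℓ d = ℓ u + 1) →
    (List.foldl (demazureStep cs) d R = u * π R ∨
      ∃ Z U₀ : List B, cs.IsReduced Z ∧ π Z = List.foldl (demazureStep cs) d R ∧
        U₀.Sublist Z ∧ π U₀ = u * π R ∧ Z.length = U₀.length + 1 ∧
        ℓ (List.foldl (demazureStep cs) d R) = ℓ (u * π R) + 1) := by
  intro R
  induction R with
  | nil =>
    intro u d hu hbr
    simpa using hbr
  | cons t R ih =>
    intro u d hu hbr
    obtain ⟨U, hUu, hUred⟩ := hu
    have hassoc : U ++ t :: R = (U ++ [t]) ++ R := by simp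
    have hUred2 : cs.IsReduced ((U ++ [t]) ++ R) := by rwa [← hassoc]
    have hUtred : cs.IsReduced (U ++ [t]) := isReduced_append_left cs hUred2
    have hUred' : cs.IsReduced U := isReduced_append_left cs hUred
    have hlu : ℓ u = U.length := by rw [← hUu]; exact hUred'
    have hUtprod : π (U ++ [t]) = u * cs.simple t := by
      rw [wordProd_append, wordProd_singleton, hUu]
    have hust : ℓ (u * cs.simple t) = ℓ u + 1 := by
      have h2 : ℓ (π (U ++ [t])) = (U ++ [t]).length := hUtred
      rw [hUtprod, List.length_append, List.length_singleton] at h2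
      omega
    have hu' : ∃ U' : List B, π U' = u * cs.simple t ∧ cs.IsReduced (U' ++ R) :=
      ⟨U ++ [t], hUtprod, hUred2⟩
    rcases hbr with hdu | ⟨Z, U₀, hZred, hZd, hsub, hU₀u, hZlen, hld⟩
    · -- d = u
      subst hdu
      have hstep : demazureStep cs d t = d * cs.simple t := by
        unfold demazureStep
        rw [if_pos (by omega)]
      rw [List.foldl_cons, hstep, wordProd_cons, ← mul_assoc]
      exact ih (d * cs.simple t) (d * cs.simple t) hu' (Or.inl rfl)
    · have hlZ : ℓ d = Z.length := by rw [← hZd]; exact hZred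
      rcases cs.length_mul_simple d t with hup | hdown
      · -- length goes up
        have hstep : demazureStep cs d t = d * cs.simple t := by
          unfold demazureStep
          rw [if_pos (by omega)]
        rw [List.foldl_cons, hstep, wordProd_cons, ← mul_assoc]
        apply ih (u * cs.simple t) (d * cs.simple t) hu'
        right
        refine ⟨Z ++ [t], U₀ ++ [t], ?_, ?_, hsub.append (List.Sublist.refl [t]), ?_, ?_, ?_⟩
        · show ℓ (π (Z ++ [t])) = (Z ++ [t]).length
          rw [wordProd_append, wordProd_singleton, hZd, hup, List.length_append,
            List.length_singleton]
          omega
        · rw [wordProd_append, wordProd_singleton, hZd]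
        · rw [wordProd_append, wordProd_singleton, hU₀u]
        · simp only [List.length_append, List.length_singleton]
          omega
        · rw [hup, hust]
          omega
      · -- length goes down: absorption, use the lifting lemma
        have hstep : demazureStep cs d t = d := by
          unfold demazureStep
          rw [if_neg (by omega)]
        have hcov : covR cs u d := covR_of_data cs hZd hU₀u hsub hZlen (by omega)
        have hdut : d = u * cs.simple t := lift_lemma cs hcov hld (by omega) (by omega)
        rw [List.foldl_cons, hstep, wordProd_cons, ← mul_assoc]
        exact ih (u * cs.simple t) d hu' (Or.inl hdut)

end DemAux

end Aux

/-- If `T₁ ++ T₂` is a reduced word for `π` and `s` is a simple reflection,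
then the Demazure product of `T₁ ++ [s] ++ T₂` is either equal to `π` or covers `π` in the
Bruhat order (in particular its length is at most `ℓ(π) + 1`). -/
theorem demazureProd_insert_eq_or_covers
    (cs : CoxeterSystem M W) (π : W) (T₁ T₂ : List B) (s : B)
    (hred : cs.IsReduced (T₁ ++ T₂)) (hprod : cs.wordProd (T₁ ++ T₂) = π) :
    (demazureProd cs (T₁ ++ s :: T₂) = π ∨
      bruhatCovers cs π (demazureProd cs (T₁ ++ s :: T₂))) ∧
    cs.length (demazureProd cs (T₁ ++ s :: T₂)) ≤ cs.length π + 1 := by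
  classical
  have hT₁red : cs.IsReduced T₁ := DemAux.isReduced_append_left cs hred
  have hfold1 : List.foldl (demazureStep cs) 1 T₁ = cs.wordProd T₁ := by
    have h := DemAux.foldl_of_reduced cs T₁ [] (by simpa using hT₁red)
    simpa using h
  have hkey : demazureProd cs (T₁ ++ s :: T₂) =
      List.foldl (demazureStep cs) (demazureStep cs (cs.wordProd T₁) s) T₂ := by
    unfold demazureProd
    rw [List.foldl_append, hfold1, List.foldl_cons]
  set u := cs.wordProd T₁ with hu
  have hlu : cs.length u = T₁.length := hT₁red
  have hπeq : u * cs.wordProd T₂ = π := by rw [hu, ← cs.wordProd_append, hprod]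
  have H : List.foldl (demazureStep cs) (demazureStep cs u s) T₂ = π ∨
      ∃ Z U₀ : List B, cs.IsReduced Z ∧
        cs.wordProd Z = List.foldl (demazureStep cs) (demazureStep cs u s) T₂ ∧
        U₀.Sublist Z ∧ cs.wordProd U₀ = π ∧ Z.length = U₀.length + 1 ∧
        cs.length (List.foldl (demazureStep cs) (demazureStep cs u s) T₂) =
          cs.length π + 1 := by
    rcases cs.length_mul_simple u s with hup | hdown
    · have hstep : demazureStep cs u s = u * cs.simple s := by
        unfold demazureStep
        rw [if_pos (by omega)]
      rw [hstep]
      have H0 := DemAux.main_fold cs T₂ u (u * cs.simple s) ⟨T₁, hu.symm, hred⟩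
        (Or.inr ⟨T₁ ++ [s], T₁, ?_, ?_, List.sublist_append_left T₁ [s], hu.symm, ?_, ?_⟩)
      · rwa [hπeq] at H0
      · show cs.length (cs.wordProd (T₁ ++ [s])) = (T₁ ++ [s]).length
        rw [cs.wordProd_append, CoxeterSystem.wordProd_singleton, ← hu, hup,
          List.length_append, List.length_singleton]
        omega
      · rw [cs.wordProd_append, CoxeterSystem.wordProd_singleton, ← hu]
      · simp
      · omega
    · have hstep : demazureStep cs u s = u := by
        unfold demazureStep
        rw [if_neg (by omega)]
      rw [hstep]
      have H0 := DemAux.main_fold cs T₂ u u ⟨T₁, hu.symm, hred⟩ (Or.inl rfl)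
      rwa [hπeq] at H0
  rw [hkey]
  rcases H with heq | ⟨Z, U₀, hZred, hZres, hsub, hU₀, hZlen, hld⟩
  · rw [heq]
    exact ⟨Or.inl rfl, by omega⟩
  · have hlres : cs.length (List.foldl (demazureStep cs) (demazureStep cs u s) T₂) =
        Z.length := by rw [← hZres]; exact hZred
    refine ⟨Or.inr ⟨⟨Z, hZred, hZres, U₀, hsub, ?_, hU₀⟩, ?_, hld⟩, by omega⟩
    · show cs.length (cs.wordProd U₀) = U₀.length
      rw [hU₀]
      omega
    · intro hc
      rw [hc] at hld
      omega

end
end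

section
/- Let n ≥ 1, let 1 ≤ k ≤ n, and let r be a positive integer. Then in ℝⁿ the convex hull of the set of lattice points { x ∈ ℤⁿ : x_i ≥ 0 for all i, and x_1 + ⋯ + x_k ≥ r } equals the polyhedron { x ∈ ℝⁿ : x_i ≥ 0 for all i, and x_1 + ⋯ + x_k ≥ r }. (The case r = 1 says that removing from the cone ℝ_{≥0}ⁿ on the standard simplex the lattice points of the face {x_1 = ⋯ = x_k = 0} and taking the convex hull of the remaining lattice points is the same as intersecting the cone with the half-space {x_1 + ⋯ + x_k ≥ 1}.) -/
open Finset

private lemma seg_mem_hull {n : ℕ} {S : Set (Fin n → ℝ)} {x d : Fin n → ℝ} {a b : ℝ}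
    (ha : 0 < a) (hb : 0 < b)
    (hy : x - a • d ∈ convexHull ℝ S) (hz : x + b • d ∈ convexHull ℝ S) :
    x ∈ convexHull ℝ S := by
  have hab : 0 < a + b := by linarith
  have h := (convex_convexHull ℝ S) hy hz
    (le_of_lt (by positivity : (0:ℝ) < b/(a+b))) (le_of_lt (by positivity : (0:ℝ) < a/(a+b)))
    (by field_simp; ring)
  have hx : (b/(a+b)) • (x - a • d) + (a/(a+b)) • (x + b • d) = x := by
    funext m
    simp only [Pi.add_apply, Pi.smul_apply, Pi.sub_apply, smul_eq_mul]
    field_simp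
    ring
  rwa [hx] at h

private lemma key_induction {n k : ℕ} {r : ℤ} (hk1 : 1 ≤ k) (hkn : k ≤ n) (hr : 0 < r) :
    ∀ N : ℕ, ∀ x : Fin n → ℝ, (∀ i, 0 ≤ x i) →
      (r : ℝ) ≤ ∑ i ∈ Finset.univ.filter (fun i : Fin n => (i : ℕ) < k), x i →
      (Finset.univ.filter (fun i : Fin n => Int.fract (x i) ≠ 0)).card ≤ N →
      x ∈ convexHull ℝ {x : Fin n → ℝ |
        (∀ i, ∃ m : ℤ, x i = (m : ℝ)) ∧ (∀ i, 0 ≤ x i) ∧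
        (r : ℝ) ≤ ∑ i ∈ Finset.univ.filter (fun i : Fin n => (i : ℕ) < k), x i} := by
  intro N
  induction N with
  | zero =>
    intro x hpos hsum hcard
    refine subset_convexHull ℝ _ ⟨fun i => ⟨⌊x i⌋, ?_⟩, hpos, hsum⟩
    have hi : Int.fract (x i) = 0 := by
      by_contra h
      have hm : i ∈ Finset.univ.filter (fun i : Fin n => Int.fract (x i) ≠ 0) :=
        mem_filter.2 ⟨mem_univ _, h⟩
      have := Finset.card_pos.2 ⟨i, hm⟩
      omega
    have := Int.self_sub_fract (x i)
    rw [hi] at this; linarith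
  | succ N ih =>
    intro x hpos hsum hcard
    set F := Finset.univ.filter (fun i : Fin n => Int.fract (x i) ≠ 0) with hF
    rcases F.eq_empty_or_nonempty with hFe | ⟨i, hiF⟩
    · -- no fractional coordinates: lattice point
      refine subset_convexHull ℝ _ ⟨fun i => ⟨⌊x i⌋, ?_⟩, hpos, hsum⟩
      have hi : Int.fract (x i) = 0 := by
        by_contra h
        rw [Finset.eq_empty_iff_forall_notMem] at hFe
        exact hFe i (mem_filter.2 ⟨mem_univ _, h⟩)
      have := Int.self_sub_fract (x i)
      rw [hi] at this; linarith
    · have hifr : Int.fract (x i) ≠ 0 := (mem_filter.1 hiF).2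
      have hfi0 : 0 < Int.fract (x i) := lt_of_le_of_ne (Int.fract_nonneg _) (Ne.symm hifr)
      have hfi1 : Int.fract (x i) < 1 := Int.fract_lt_one _
      set K := Finset.univ.filter (fun i : Fin n => (i : ℕ) < k) with hK
      by_cases hik : (i : ℕ) < k
      · have hiK : i ∈ K := mem_filter.2 ⟨mem_univ _, hik⟩
        by_cases hj : ∃ j : Fin n, j ≠ i ∧ (j : ℕ) < k ∧ Int.fract (x j) ≠ 0
        · -- PAIR CASE
          obtain ⟨j, hji, hjk, hjfr⟩ := hj
          have hjK : j ∈ K := mem_filter.2 ⟨mem_univ _, hjk⟩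
          have hjF : j ∈ F := mem_filter.2 ⟨mem_univ _, hjfr⟩
          have hfj0 : 0 < Int.fract (x j) := lt_of_le_of_ne (Int.fract_nonneg _) (Ne.symm hjfr)
          have hfj1 : Int.fract (x j) < 1 := Int.fract_lt_one _
          set d : Fin n → ℝ := Pi.single i 1 - Pi.single j 1 with hd
          set a : ℝ := min (Int.fract (x i)) (1 - Int.fract (x j)) with ha
          set b : ℝ := min (1 - Int.fract (x i)) (Int.fract (x j)) with hb
          have ha0 : 0 < a := lt_min hfi0 (by linarith)
          have hb0 : 0 < b := lt_min (by linarith) hfj0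
          have hdi : d i = 1 := by simp [hd, Pi.single_eq_same, Pi.single_eq_of_ne hji.symm]
          have hdj : d j = -1 := by simp [hd, Pi.single_eq_same, Pi.single_eq_of_ne hji]
          have hdm : ∀ m : Fin n, m ≠ i → m ≠ j → d m = 0 := by
            intro m hmi hmj; simp [hd, Pi.single_eq_of_ne hmi, Pi.single_eq_of_ne hmj]
          -- sum of d over K is zero
          have hsd : ∑ m ∈ K, d m = 0 := by
            simp only [hd, Pi.sub_apply, Finset.sum_sub_distrib,
              Finset.sum_pi_single', if_pos hiK, if_pos hjK, sub_self]
          -- generic: x + c • d has same sum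
          have hsum' : ∀ c : ℝ, ∑ m ∈ K, (x + c • d) m = ∑ m ∈ K, x m := by
            intro c
            simp only [Pi.add_apply, Pi.smul_apply, smul_eq_mul,
              Finset.sum_add_distrib, ← Finset.mul_sum, hsd, mul_zero, add_zero]
          have hfloori : (0:ℝ) ≤ (⌊x i⌋ : ℝ) := by
            exact_mod_cast Int.floor_nonneg.2 (hpos i)
          have hfloorj : (0:ℝ) ≤ (⌊x j⌋ : ℝ) := by
            exact_mod_cast Int.floor_nonneg.2 (hpos j)
          have hselfi := Int.self_sub_fract (x i)
          have hselfj := Int.self_sub_fract (x j)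
          -- endpoints
          have hy : x - a • d ∈ convexHull ℝ {z : Fin n → ℝ | (∀ i, ∃ m : ℤ, z i = (m : ℝ)) ∧ (∀ i, 0 ≤ z i) ∧ (r : ℝ) ≤ ∑ i ∈ K, z i} := by
            apply ih
            · intro m
              rcases eq_or_ne m i with rfl | hmi
              · simp only [Pi.sub_apply, Pi.smul_apply, smul_eq_mul, hdi, mul_one]
                have : a ≤ Int.fract (x m) := min_le_left _ _
                linarith
              rcases eq_or_ne m j with rfl | hmj
              · simp only [Pi.sub_apply, Pi.smul_apply, smul_eq_mul, hdj]
                have := hpos m; linarith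
              · simp only [Pi.sub_apply, Pi.smul_apply, smul_eq_mul, hdm m hmi hmj, mul_zero,
                  sub_zero]; exact hpos m
            · have := hsum' (-a)
              simp only [neg_smul] at this
              calc (r:ℝ) ≤ ∑ m ∈ K, x m := hsum
                _ = ∑ m ∈ K, (x + -(a • d)) m := this.symm
                _ = ∑ m ∈ K, (x - a • d) m := by
                    apply Finset.sum_congr rfl; intro m _; simp [sub_eq_add_neg]
            · -- card decreases
              have hsub : Finset.univ.filter (fun m : Fin n => Int.fract ((x - a • d) m) ≠ 0) ⊆ F := by
                intro m hm
                have hm' := (mem_filter.1 hm).2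
                rcases eq_or_ne m i with rfl | hmi
                · exact hiF
                rcases eq_or_ne m j with rfl | hmj
                · exact hjF
                · refine mem_filter.2 ⟨mem_univ _, ?_⟩
                  simpa [Pi.sub_apply, Pi.smul_apply, hdm m hmi hmj] using hm'
              have hstrict : ∃ m ∈ F,
                  m ∉ Finset.univ.filter (fun m : Fin n => Int.fract ((x - a • d) m) ≠ 0) := by
                rcases min_cases (Int.fract (x i)) (1 - Int.fract (x j)) with ⟨hmin, _⟩ | ⟨hmin, _⟩
                · refine ⟨i, hiF, ?_⟩
                  simp only [mem_filter, mem_univ, true_and, not_not]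
                  have : (x - a • d) i = (⌊x i⌋ : ℝ) := by
                    simp only [Pi.sub_apply, Pi.smul_apply, smul_eq_mul, hdi, mul_one, ha, hmin]
                    linarith
                  rw [this, Int.fract_intCast]
                · refine ⟨j, hjF, ?_⟩
                  simp only [mem_filter, mem_univ, true_and, not_not]
                  have : (x - a • d) j = ((⌊x j⌋ + 1 : ℤ) : ℝ) := by
                    simp only [Pi.sub_apply, Pi.smul_apply, smul_eq_mul, hdj, ha, hmin]
                    push_cast; linarith
                  rw [this, Int.fract_intCast]
              obtain ⟨m, hmF, hmNot⟩ := hstrict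
              have : (Finset.univ.filter (fun m : Fin n => Int.fract ((x - a • d) m) ≠ 0)).card
                  < F.card :=
                Finset.card_lt_card ⟨hsub, fun hsup => hmNot (hsup hmF)⟩
              omega
          have hz : x + b • d ∈ convexHull ℝ {z : Fin n → ℝ | (∀ i, ∃ m : ℤ, z i = (m : ℝ)) ∧ (∀ i, 0 ≤ z i) ∧ (r : ℝ) ≤ ∑ i ∈ K, z i} := by
            apply ih
            · intro m
              rcases eq_or_ne m i with rfl | hmi
              · simp only [Pi.add_apply, Pi.smul_apply, smul_eq_mul, hdi, mul_one]
                have := hpos m; linarith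
              rcases eq_or_ne m j with rfl | hmj
              · simp only [Pi.add_apply, Pi.smul_apply, smul_eq_mul, hdj]
                have : b ≤ Int.fract (x m) := min_le_right _ _
                linarith
              · simp only [Pi.add_apply, Pi.smul_apply, smul_eq_mul, hdm m hmi hmj, mul_zero,
                  add_zero]; exact hpos m
            · rw [hsum' b]; exact hsum
            · have hsub : Finset.univ.filter (fun m : Fin n => Int.fract ((x + b • d) m) ≠ 0) ⊆ F := by
                intro m hm
                have hm' := (mem_filter.1 hm).2
                rcases eq_or_ne m i with rfl | hmi
                · exact hiF
                rcases eq_or_ne m j with rfl | hmj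
                · exact hjF
                · refine mem_filter.2 ⟨mem_univ _, ?_⟩
                  simpa [Pi.add_apply, Pi.smul_apply, hdm m hmi hmj] using hm'
              have hstrict : ∃ m ∈ F,
                  m ∉ Finset.univ.filter (fun m : Fin n => Int.fract ((x + b • d) m) ≠ 0) := by
                rcases min_cases (1 - Int.fract (x i)) (Int.fract (x j)) with ⟨hmin, _⟩ | ⟨hmin, _⟩
                · refine ⟨i, hiF, ?_⟩
                  simp only [mem_filter, mem_univ, true_and, not_not]
                  have : (x + b • d) i = ((⌊x i⌋ + 1 : ℤ) : ℝ) := by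
                    simp only [Pi.add_apply, Pi.smul_apply, smul_eq_mul, hdi, mul_one, hb, hmin]
                    push_cast; linarith
                  rw [this, Int.fract_intCast]
                · refine ⟨j, hjF, ?_⟩
                  simp only [mem_filter, mem_univ, true_and, not_not]
                  have : (x + b • d) j = (⌊x j⌋ : ℝ) := by
                    simp only [Pi.add_apply, Pi.smul_apply, smul_eq_mul, hdj, hb, hmin]
                    linarith
                  rw [this, Int.fract_intCast]
              obtain ⟨m, hmF, hmNot⟩ := hstrict
              have : (Finset.univ.filter (fun m : Fin n => Int.fract ((x + b • d) m) ≠ 0)).card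
                  < F.card :=
                Finset.card_lt_card ⟨hsub, fun hsup => hmNot (hsup hmF)⟩
              omega
          exact seg_mem_hull ha0 hb0 hy hz
        · -- SINGLE CASE, i ∈ K, i is the only fractional coordinate among first k
          push_neg at hj
          set d : Fin n → ℝ := Pi.single i 1 with hd
          set a : ℝ := Int.fract (x i) with ha
          set b : ℝ := 1 - Int.fract (x i) with hb
          have ha0 : 0 < a := hfi0
          have hb0 : 0 < b := by simp only [hb]; linarith
          have hdi : d i = 1 := by simp [hd]
          have hdm : ∀ m : Fin n, m ≠ i → d m = 0 := by
            intro m hmi; simp [hd, Pi.single_eq_of_ne hmi]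
          have hselfi := Int.self_sub_fract (x i)
          have hfloori : (0:ℝ) ≤ (⌊x i⌋ : ℝ) := by
            exact_mod_cast Int.floor_nonneg.2 (hpos i)
          have hsd : ∑ m ∈ K, d m = 1 := by
            simp only [hd, Finset.sum_pi_single', if_pos hiK]
          have hsum' : ∀ c : ℝ, ∑ m ∈ K, (x + c • d) m = (∑ m ∈ K, x m) + c := by
            intro c
            simp only [Pi.add_apply, Pi.smul_apply, smul_eq_mul,
              Finset.sum_add_distrib, ← Finset.mul_sum, hsd, mul_one]
          have hcardsub : ∀ w : Fin n → ℝ, Int.fract (w i) = 0 → (∀ m, m ≠ i → w m = x m) →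
              (Finset.univ.filter (fun m : Fin n => Int.fract (w m) ≠ 0)).card ≤ N := by
            intro w hwi hwm
            have hsub : Finset.univ.filter (fun m : Fin n => Int.fract (w m) ≠ 0) ⊆ F.erase i := by
              intro m hm
              have hm' := (mem_filter.1 hm).2
              rcases eq_or_ne m i with rfl | hmi
              · exact absurd hwi hm'
              · exact Finset.mem_erase.2 ⟨hmi, mem_filter.2 ⟨mem_univ _, by rwa [← hwm m hmi]⟩⟩
            have h1 := Finset.card_le_card hsub
            have h2 := Finset.card_erase_of_mem hiF
            have h3 := Finset.card_pos.2 ⟨i, hiF⟩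
            omega
          have hy : x - a • d ∈ convexHull ℝ {z : Fin n → ℝ | (∀ i, ∃ m : ℤ, z i = (m : ℝ)) ∧ (∀ i, 0 ≤ z i) ∧ (r : ℝ) ≤ ∑ i ∈ K, z i} := by
            have hyi : (x - a • d) i = (⌊x i⌋ : ℝ) := by
              simp only [Pi.sub_apply, Pi.smul_apply, smul_eq_mul, hdi, mul_one, ha]
              linarith
            have hym : ∀ m, m ≠ i → (x - a • d) m = x m := by
              intro m hmi
              simp [Pi.sub_apply, Pi.smul_apply, hdm m hmi]
            apply ih
            · intro m
              rcases eq_or_ne m i with rfl | hmi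
              · rw [hyi]; exact hfloori
              · rw [hym m hmi]; exact hpos m
            · -- integrality argument: sum over K of y is an integer > r - 1
              have hyint : ∀ m ∈ K, (x - a • d) m = ((⌊(x - a • d) m⌋ : ℤ) : ℝ) := by
                intro m hmK
                rcases eq_or_ne m i with rfl | hmi
                · rw [hyi]; simp
                · rw [hym m hmi]
                  have hfr : Int.fract (x m) = 0 := hj m hmi (mem_filter.1 hmK).2
                  have := Int.self_sub_fract (x m)
                  rw [hfr, sub_zero] at this
                  exact this
              have hsumcast : ∑ m ∈ K, (x - a • d) m
                  = ((∑ m ∈ K, ⌊(x - a • d) m⌋ : ℤ) : ℝ) := by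
                push_cast
                exact Finset.sum_congr rfl hyint
              have hval : ∑ m ∈ K, (x - a • d) m = (∑ m ∈ K, x m) - a := by
                have := hsum' (-a)
                simp only [neg_smul] at this
                have heq : ∑ m ∈ K, (x - a • d) m = ∑ m ∈ K, (x + -(a • d)) m := by
                  apply Finset.sum_congr rfl; intro m _; simp [sub_eq_add_neg]
                rw [heq, this]; ring
              have hgt : ((r : ℝ) - 1) < ((∑ m ∈ K, ⌊(x - a • d) m⌋ : ℤ) : ℝ) := by
                rw [← hsumcast, hval, ha]; linarith
              have hZ : r - 1 < ∑ m ∈ K, ⌊(x - a • d) m⌋ := by exact_mod_cast hgt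
              have hZ' : r ≤ ∑ m ∈ K, ⌊(x - a • d) m⌋ := by omega
              rw [hsumcast]; exact_mod_cast hZ'
            · exact hcardsub _ (by rw [hyi]; simp) hym
          have hz : x + b • d ∈ convexHull ℝ {z : Fin n → ℝ | (∀ i, ∃ m : ℤ, z i = (m : ℝ)) ∧ (∀ i, 0 ≤ z i) ∧ (r : ℝ) ≤ ∑ i ∈ K, z i} := by
            have hzi : (x + b • d) i = ((⌊x i⌋ + 1 : ℤ) : ℝ) := by
              simp only [Pi.add_apply, Pi.smul_apply, smul_eq_mul, hdi, mul_one, hb]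
              push_cast; linarith
            have hzm : ∀ m, m ≠ i → (x + b • d) m = x m := by
              intro m hmi
              simp [Pi.add_apply, Pi.smul_apply, hdm m hmi]
            apply ih
            · intro m
              rcases eq_or_ne m i with rfl | hmi
              · rw [hzi]; push_cast; linarith
              · rw [hzm m hmi]; exact hpos m
            · rw [hsum' b]; linarith
            · exact hcardsub _ (by rw [hzi]; exact Int.fract_intCast _) hzm
          exact seg_mem_hull ha0 hb0 hy hz
      · -- SINGLE CASE, i ∉ K: sum unaffected
        have hiK : i ∉ K := fun h => hik (mem_filter.1 h).2
        set d : Fin n → ℝ := Pi.single i 1 with hd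
        set a : ℝ := Int.fract (x i) with ha
        set b : ℝ := 1 - Int.fract (x i) with hb
        have ha0 : 0 < a := hfi0
        have hb0 : 0 < b := by simp only [hb]; linarith
        have hdi : d i = 1 := by simp [hd]
        have hdm : ∀ m : Fin n, m ≠ i → d m = 0 := by
          intro m hmi; simp [hd, Pi.single_eq_of_ne hmi]
        have hselfi := Int.self_sub_fract (x i)
        have hfloori : (0:ℝ) ≤ (⌊x i⌋ : ℝ) := by
          exact_mod_cast Int.floor_nonneg.2 (hpos i)
        have hsd : ∑ m ∈ K, d m = 0 := by
          simp only [hd, Finset.sum_pi_single', if_neg hiK]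
        have hsum' : ∀ c : ℝ, ∑ m ∈ K, (x + c • d) m = ∑ m ∈ K, x m := by
          intro c
          simp only [Pi.add_apply, Pi.smul_apply, smul_eq_mul,
            Finset.sum_add_distrib, ← Finset.mul_sum, hsd, mul_zero, add_zero]
        have hcardsub : ∀ w : Fin n → ℝ, Int.fract (w i) = 0 → (∀ m, m ≠ i → w m = x m) →
            (Finset.univ.filter (fun m : Fin n => Int.fract (w m) ≠ 0)).card ≤ N := by
          intro w hwi hwm
          have hsub : Finset.univ.filter (fun m : Fin n => Int.fract (w m) ≠ 0) ⊆ F.erase i := by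
            intro m hm
            have hm' := (mem_filter.1 hm).2
            rcases eq_or_ne m i with rfl | hmi
            · exact absurd hwi hm'
            · exact Finset.mem_erase.2 ⟨hmi, mem_filter.2 ⟨mem_univ _, by rwa [← hwm m hmi]⟩⟩
          have h1 := Finset.card_le_card hsub
          have h2 := Finset.card_erase_of_mem hiF
          have h3 := Finset.card_pos.2 ⟨i, hiF⟩
          omega
        have hy : x - a • d ∈ convexHull ℝ {z : Fin n → ℝ | (∀ i, ∃ m : ℤ, z i = (m : ℝ)) ∧ (∀ i, 0 ≤ z i) ∧ (r : ℝ) ≤ ∑ i ∈ K, z i} := by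
          have hyi : (x - a • d) i = (⌊x i⌋ : ℝ) := by
            simp only [Pi.sub_apply, Pi.smul_apply, smul_eq_mul, hdi, mul_one, ha]
            linarith
          have hym : ∀ m, m ≠ i → (x - a • d) m = x m := by
            intro m hmi
            simp [Pi.sub_apply, Pi.smul_apply, hdm m hmi]
          apply ih
          · intro m
            rcases eq_or_ne m i with rfl | hmi
            · rw [hyi]; exact hfloori
            · rw [hym m hmi]; exact hpos m
          · have := hsum' (-a)
            simp only [neg_smul] at this
            have heq : ∑ m ∈ K, (x - a • d) m = ∑ m ∈ K, (x + -(a • d)) m := by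
              apply Finset.sum_congr rfl; intro m _; simp [sub_eq_add_neg]
            rw [heq, this]; exact hsum
          · exact hcardsub _ (by rw [hyi]; simp) hym
        have hz : x + b • d ∈ convexHull ℝ {z : Fin n → ℝ | (∀ i, ∃ m : ℤ, z i = (m : ℝ)) ∧ (∀ i, 0 ≤ z i) ∧ (r : ℝ) ≤ ∑ i ∈ K, z i} := by
          have hzi : (x + b • d) i = ((⌊x i⌋ + 1 : ℤ) : ℝ) := by
            simp only [Pi.add_apply, Pi.smul_apply, smul_eq_mul, hdi, mul_one, hb]
            push_cast; linarith
          have hzm : ∀ m, m ≠ i → (x + b • d) m = x m := by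
            intro m hmi
            simp [Pi.add_apply, Pi.smul_apply, hdm m hmi]
          apply ih
          · intro m
            rcases eq_or_ne m i with rfl | hmi
            · rw [hzi]; push_cast; linarith
            · rw [hzm m hmi]; exact hpos m
          · rw [hsum' b]; exact hsum
          · exact hcardsub _ (by rw [hzi]; exact Int.fract_intCast _) hzm
        exact seg_mem_hull ha0 hb0 hy hz

/-- For `1 ≤ k ≤ n` and a positive integer `r`, the convex hull in `ℝⁿ` of the
lattice points `{x ∈ ℤⁿ : x ≥ 0, x₁ + ⋯ + x_k ≥ r}` equals the polyhedron
`{x ∈ ℝⁿ : x ≥ 0, x₁ + ⋯ + x_k ≥ r}`. -/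
theorem convexHull_latticePoints_orthant_halfspace
    (n k : ℕ) (hn : 1 ≤ n) (hk1 : 1 ≤ k) (hkn : k ≤ n) (r : ℤ) (hr : 0 < r) :
    convexHull ℝ {x : Fin n → ℝ |
        (∀ i, ∃ m : ℤ, x i = (m : ℝ)) ∧ (∀ i, 0 ≤ x i) ∧
        (r : ℝ) ≤ ∑ i ∈ Finset.univ.filter (fun i : Fin n => (i : ℕ) < k), x i}
      = {x : Fin n → ℝ | (∀ i, 0 ≤ x i) ∧
          (r : ℝ) ≤ ∑ i ∈ Finset.univ.filter (fun i : Fin n => (i : ℕ) < k), x i} := by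
  apply Set.Subset.antisymm
  · apply convexHull_min
    · intro x hx
      exact ⟨hx.2.1, hx.2.2⟩
    · intro x hx y hy a b ha hb hab
      constructor
      · intro i
        have := hx.1 i; have := hy.1 i
        simp only [Pi.add_apply, Pi.smul_apply, smul_eq_mul]
        positivity
      · simp only [Pi.add_apply, Pi.smul_apply, smul_eq_mul,
          Finset.sum_add_distrib, ← Finset.mul_sum]
        calc (r:ℝ) = a * r + b * r := by rw [← add_mul, hab, one_mul]
          _ ≤ a * (∑ i ∈ Finset.univ.filter (fun i : Fin n => (i : ℕ) < k), x i)
              + b * (∑ i ∈ Finset.univ.filter (fun i : Fin n => (i : ℕ) < k), y i) := by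
            gcongr
            · exact hx.2
            · exact hy.2
  · intro x hx
    exact key_induction hk1 hkn hr
      (Finset.univ.filter (fun i : Fin n => Int.fract (x i) ≠ 0)).card x hx.1 hx.2 le_rfl
end

section
/- Let p be a positive integer, let C ⊆ ℝⁿ be a convex cone (a convex set closed under multiplication by nonnegative real scalars), and let B ⊆ C be an extreme subset of C (that is, whenever a point of B lies in the open segment between two points of C, both endpoints lie in B) satisfying p·B ⊆ B. Let S̃ = conv( (C ∖ B) ∩ ℤⁿ ) be the convex hull in ℝⁿ of the lattice points of C not lying in B. Then for every a ∈ ℤⁿ, if p·a ∈ S̃ then a ∈ S̃. (This is the lattice-point statement showing that the blow-up of a weakly normal affine toric scheme along its boundary is again Frobenius split by the standard splitting, the standard splitting acting as the multiplication by 1/p map on lattice points.) -/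
/-- Let `p` be a positive integer, `C ⊆ ℝⁿ` a convex cone and `B ⊆ C` an
extreme subset of `C` with `p • B ⊆ B`.  Let `S̃` be the convex hull of the lattice points of
`C` not lying in `B`.  Then for every lattice point `a`, if `p • a ∈ S̃` then `a ∈ S̃`.
(The standard Frobenius splitting acts as multiplication by `1/p` on lattice points, so the
blow-up of a weakly normal affine toric scheme along its boundary is again Frobenius split.) -/
theorem mem_convexHull_of_smul_mem_convexHull
    (n p : ℕ) (hp : 0 < p) (C B : Set (Fin n → ℝ))
    (hC : Convex ℝ C)
    (hcone : ∀ (c : ℝ), 0 ≤ c → ∀ x ∈ C, c • x ∈ C)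
    (hB : IsExtreme ℝ C B)
    (hpB : ∀ x ∈ B, (p : ℝ) • x ∈ B)
    (a : Fin n → ℤ)
    (ha : (p : ℝ) • (fun i => (a i : ℝ)) ∈
      convexHull ℝ ((C \ B) ∩ {x : Fin n → ℝ | ∀ i, ∃ m : ℤ, x i = (m : ℝ)})) :
    (fun i => (a i : ℝ)) ∈
      convexHull ℝ ((C \ B) ∩ {x : Fin n → ℝ | ∀ i, ∃ m : ℤ, x i = (m : ℝ)}) := by
  set av : Fin n → ℝ := fun i => (a i : ℝ) with hav
  have hCB : Convex ℝ (C \ B) := hB.convex_diff hC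
  have hsub : convexHull ℝ ((C \ B) ∩ {x : Fin n → ℝ | ∀ i, ∃ m : ℤ, x i = (m : ℝ)})
      ⊆ C \ B := convexHull_min Set.inter_subset_left hCB
  have hpa : (p : ℝ) • av ∈ C \ B := hsub ha
  have hp0 : (0 : ℝ) < (p : ℝ) := by exact_mod_cast hp
  have haC : av ∈ C := by
    have := hcone (p : ℝ)⁻¹ (by positivity) _ hpa.1
    rwa [smul_smul, inv_mul_cancel₀ hp0.ne', one_smul] at this
  have haB : av ∉ B := fun h => hpa.2 (hpB av h)
  exact subset_convexHull ℝ _ ⟨⟨haC, haB⟩, fun i => ⟨a i, rfl⟩⟩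
end
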